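/- arXiv:2311.09239 — 11 statements merged into one kernel-verified Lean document; each statement's English description precedes it below -/
import Mathlib

section
/- No total computable function eventually dominates β: for every total computable function g : ℕ → ℕ and every N ∈ ℕ, there exists J ≥ N with β(J) > g(J). -/
open scoped Classical

private def Fb (a : ℕ → ℕ) (j m : ℕ) : Bool :=
  Nat.rec false (fun y IH => IH || (a y == j)) m

private lemma Fb_comp (a : ℕ → ℕ) (ha : Computable a) :
    Computable₂ (Fb a) := by
  have hor : Computable₂ (fun (b c : Bool) => b || c) := Primrec.or.to_comp
  have hbeq : Computable₂ (fun (m n : ℕ) => m == n) := Primrec.beq.to_comp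
  have h1 : Computable (fun (x : (ℕ × ℕ) × ℕ × Bool) => x.2.2) :=
    Computable.snd.comp Computable.snd
  have h2 : Computable (fun (x : (ℕ × ℕ) × ℕ × Bool) => a x.2.1) :=
    ha.comp (Computable.fst.comp Computable.snd)
  have h3 : Computable (fun (x : (ℕ × ℕ) × ℕ × Bool) => x.1.1) :=
    Computable.fst.comp Computable.fst
  have h : Computable₂ (fun (p : ℕ × ℕ) (q : ℕ × Bool) => q.2 || (a q.1 == p.1)) :=
    Computable.to₂ (hor.comp h1 (hbeq.comp h2 h3))
  exact Computable.nat_rec Computable.snd (Computable.const false) h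

private lemma Fb_iff (a : ℕ → ℕ) (j m : ℕ) :
    Fb a j m = true ↔ ∃ n < m, a n = j := by
  induction m with
  | zero => simp [Fb]
  | succ m ih =>
    simp only [Fb, Bool.or_eq_true, beq_iff_eq] at *
    constructor
    · rintro (h | h)
      · obtain ⟨n, hn, hn'⟩ := ih.1 h
        exact ⟨n, Nat.lt_succ_of_lt hn, hn'⟩
      · exact ⟨m, Nat.lt_succ_self m, h⟩
    · rintro ⟨n, hn, hn'⟩
      rcases Nat.lt_succ_iff_lt_or_eq.1 hn with h | rfl
      · exact Or.inl (ih.2 ⟨n, h, hn'⟩)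
      · exact Or.inr hn'

/-- No total computable function eventually dominates
β(J) = max{ν(j) : j < J and j ∈ A} (with max ∅ = 0): for every computable `g`
and every `N`, there exists `J ≥ N` with `β J > g J`. -/
theorem beta_not_eventually_dominated (a : ℕ → ℕ) (ha : Computable a)
    (hinj : Function.Injective a)
    (hA : ¬ ComputablePred (fun j : ℕ => j ∈ Set.range a))
    (β : ℕ → ℕ)
    (hβ : ∀ J : ℕ, β J =
      (Finset.range J).sup (fun j => if h : ∃ n, a n = j then Nat.find h else 0))
    (g : ℕ → ℕ) (hg : Computable g) (N : ℕ) :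
    ∃ J : ℕ, N ≤ J ∧ g J < β J := by
  by_contra hcon
  push_neg at hcon
  apply hA
  -- bound function
  set B : ℕ → ℕ := fun j => g (max (j + 1) N) + 1 with hB
  have hBc : Computable B := by
    exact Computable.succ.comp (hg.comp
      ((Primrec.nat_max.to_comp).comp Computable.succ (Computable.const N)))
  have hf : Computable (fun j => Fb a j (B j)) :=
    (Fb_comp a ha).comp Computable.id hBc
  rw [ComputablePred.computable_iff]
  refine ⟨fun j => Fb a j (B j), hf, funext fun j => propext ?_⟩
  rw [Fb_iff]
  constructor
  · rintro ⟨n, rfl⟩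
    have hex : ∃ m, a m = a n := ⟨n, rfl⟩
    refine ⟨Nat.find hex, ?_, Nat.find_spec hex⟩
    have hjJ : a n < max (a n + 1) N := lt_of_lt_of_le (Nat.lt_succ_self _) (le_max_left _ _)
    have hsup : Nat.find hex ≤ β (max (a n + 1) N) := by
      rw [hβ]
      have : a n ∈ Finset.range (max (a n + 1) N) := Finset.mem_range.2 hjJ
      have := Finset.le_sup (f := fun j => if h : ∃ m, a m = j then Nat.find h else 0) this
      simpa [hex] using this
    have hβg : β (max (a n + 1) N) ≤ g (max (a n + 1) N) := hcon _ (le_max_right _ _)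
    exact lt_of_le_of_lt (hsup.trans hβg) (Nat.lt_succ_self _)
  · rintro ⟨n, _, hn⟩
    exact ⟨n, hn⟩
end

section
/- If m ≠ n then the supports of ψ_m and ψ_n do not intersect: there is no x ∈ ℝ with ψ_m(x) ≠ 0 and ψ_n(x) ≠ 0. -/
/-- Two small intervals around distinct dyadic points are disjoint. -/
lemma blips_aux (M N A B : ℕ) (hAB : A < B) (x : ℝ)
    (h1 : |x - (2:ℝ) ^ (-(A:ℤ))| < (2:ℝ) ^ (-((M + A + 2 : ℕ) : ℤ)))
    (h2 : |x - (2:ℝ) ^ (-(B:ℤ))| < (2:ℝ) ^ (-((N + B + 2 : ℕ) : ℤ))) : False := by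
  have h2one : (1:ℝ) ≤ 2 := one_le_two
  have e1 : ((2:ℝ) ^ (-((M + A + 2 : ℕ) : ℤ))) ≤ (2:ℝ) ^ (-((A:ℤ) + 2)) := by
    apply zpow_le_zpow_right₀ h2one
    push_cast; omega
  have e2 : ((2:ℝ) ^ (-((N + B + 2 : ℕ) : ℤ))) ≤ (2:ℝ) ^ (-((A:ℤ) + 3)) := by
    apply zpow_le_zpow_right₀ h2one
    push_cast; omega
  have e3 : ((2:ℝ) ^ (-(B:ℤ))) ≤ (2:ℝ) ^ (-((A:ℤ) + 1)) := by
    apply zpow_le_zpow_right₀ h2one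
    push_cast; omega
  have key : (2:ℝ) ^ (-(A:ℤ)) - (2:ℝ) ^ (-(B:ℤ)) ≤
      |x - (2:ℝ) ^ (-(A:ℤ))| + |x - (2:ℝ) ^ (-(B:ℤ))| := by
    have := abs_sub_abs_le_abs_sub (x - (2:ℝ) ^ (-(B:ℤ))) (x - (2:ℝ) ^ (-(A:ℤ)))
    have h := abs_sub ((2:ℝ) ^ (-(A:ℤ))) ((2:ℝ) ^ (-(B:ℤ)))
    calc (2:ℝ) ^ (-(A:ℤ)) - (2:ℝ) ^ (-(B:ℤ)) ≤ |(2:ℝ) ^ (-(A:ℤ)) - (2:ℝ) ^ (-(B:ℤ))| :=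
          le_abs_self _
      _ = |(x - (2:ℝ) ^ (-(B:ℤ))) - (x - (2:ℝ) ^ (-(A:ℤ)))| := by ring_nf
      _ ≤ |x - (2:ℝ) ^ (-(B:ℤ))| + |x - (2:ℝ) ^ (-(A:ℤ))| := abs_sub _ _
      _ = _ := by ring
  have pA : (2:ℝ) ^ (-(A:ℤ)) = (2:ℝ) ^ (-((A:ℤ)+1)) + (2:ℝ) ^ (-((A:ℤ)+1)) := by
    rw [← two_mul, show (-(A:ℤ)) = (-((A:ℤ)+1)) + 1 by ring, zpow_add₀ (by norm_num : (2:ℝ) ≠ 0)]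
    ring
  have pA1 : (2:ℝ) ^ (-((A:ℤ)+1)) = (2:ℝ) ^ (-((A:ℤ)+2)) + (2:ℝ) ^ (-((A:ℤ)+2)) := by
    rw [← two_mul, show (-((A:ℤ)+1)) = (-((A:ℤ)+2)) + 1 by ring,
      zpow_add₀ (by norm_num : (2:ℝ) ≠ 0)]
    ring
  have pA2 : (0:ℝ) < (2:ℝ) ^ (-((A:ℤ)+3)) := by positivity
  have pA3 : (2:ℝ) ^ (-((A:ℤ)+3)) < (2:ℝ) ^ (-((A:ℤ)+2)) := by
    apply zpow_lt_zpow_right₀ (by norm_num : (1:ℝ) < 2); omega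
  linarith

/-- If m ≠ n then the supports of ψ_m and ψ_n do not intersect. -/
theorem blips_disjoint_support (a : ℕ → ℕ) (ha : Computable a)
    (hinj : Function.Injective a)
    (φ : ℝ → ℝ)
    (hφ₁ : ∀ x : ℝ, |x| < 1 → φ x = Real.exp (-(x ^ 2 / (1 - x ^ 2))))
    (hφ₂ : ∀ x : ℝ, 1 ≤ |x| → φ x = 0)
    (ψ : ℕ → ℝ → ℝ)
    (hψ : ∀ n : ℕ, ∀ x : ℝ, ψ n x =
      (4 : ℝ) ^ (-(a n : ℤ)) * φ ((2 : ℝ) ^ (n + a n + 2) * (x - (2 : ℝ) ^ (-(a n : ℤ)))))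
    (m n : ℕ) (hmn : m ≠ n) :
    ¬ ∃ x : ℝ, ψ m x ≠ 0 ∧ ψ n x ≠ 0 := by
  rintro ⟨x, hm, hn⟩
  have bound : ∀ k : ℕ, ψ k x ≠ 0 →
      |x - (2:ℝ) ^ (-(a k : ℤ))| < (2:ℝ) ^ (-((k + a k + 2 : ℕ) : ℤ)) := by
    intro k hk
    rw [hψ] at hk
    have hφne : φ ((2 : ℝ) ^ (k + a k + 2) * (x - (2 : ℝ) ^ (-(a k : ℤ)))) ≠ 0 :=
      fun h => hk (by rw [h, mul_zero])
    have habs : |(2 : ℝ) ^ (k + a k + 2) * (x - (2 : ℝ) ^ (-(a k : ℤ)))| < 1 := by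
      by_contra h
      exact hφne (hφ₂ _ (le_of_not_gt h))
    rw [abs_mul, abs_of_pos (by positivity : (0:ℝ) < (2:ℝ) ^ (k + a k + 2))] at habs
    have hp : (0:ℝ) < (2:ℝ) ^ (k + a k + 2) := by positivity
    rw [show (2:ℝ) ^ (-((k + a k + 2 : ℕ) : ℤ)) = ((2:ℝ) ^ (k + a k + 2))⁻¹ by
      rw [zpow_neg, zpow_natCast]]
    have hc := mul_inv_cancel₀ (ne_of_gt hp)
    nlinarith [habs, hc, hp, inv_pos.mpr hp]
  have hAB : a m ≠ a n := fun h => hmn (hinj h)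
  rcases lt_or_gt_of_ne hAB with h | h
  · exact blips_aux m n (a m) (a n) h x (bound m hm) (bound n hn)
  · exact blips_aux n m (a n) (a m) h x (bound n hn) (bound m hm)
end

section
/- The series Σ_{n=0}^∞ ψ_n(x) converges uniformly on ℝ; its sum f' is a continuous function on ℝ, and f'(x) = 0 for all x ≥ 5/4 and all x ≤ 0. -/
/-- Σ ψ_n converges uniformly on ℝ; the sum f' is continuous, and vanishes
for x ≥ 5/4 and for x ≤ 0. -/
theorem blip_series_uniform (a : ℕ → ℕ) (ha : Computable a)
    (hinj : Function.Injective a)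
    (φ : ℝ → ℝ)
    (hφ₁ : ∀ x : ℝ, |x| < 1 → φ x = Real.exp (-(x ^ 2 / (1 - x ^ 2))))
    (hφ₂ : ∀ x : ℝ, 1 ≤ |x| → φ x = 0)
    (ψ : ℕ → ℝ → ℝ)
    (hψ : ∀ n : ℕ, ∀ x : ℝ, ψ n x =
      (4 : ℝ) ^ (-(a n : ℤ)) * φ ((2 : ℝ) ^ (n + a n + 2) * (x - (2 : ℝ) ^ (-(a n : ℤ)))))
    (f' : ℝ → ℝ) (hf' : ∀ x : ℝ, f' x = ∑' n : ℕ, ψ n x) :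
    TendstoUniformly (fun N : ℕ => fun x : ℝ => ∑ n ∈ Finset.range N, ψ n x) f'
        Filter.atTop ∧
      Continuous f' ∧ (∀ x : ℝ, 5 / 4 ≤ x → f' x = 0) ∧ (∀ x : ℝ, x ≤ 0 → f' x = 0) := by
  -- φ in terms of the smooth function `expNegInvGlue`
  have hφeq : ∀ x : ℝ, φ x = Real.exp 1 * expNegInvGlue (1 - x ^ 2) := by
    intro x
    rcases lt_or_ge (|x|) 1 with h | h
    · have hx2 : x ^ 2 < 1 := by
        have h' := abs_lt.mp h
        nlinarith [h'.1, h'.2]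
      have hpos : 0 < 1 - x ^ 2 := by linarith
      rw [hφ₁ x h, expNegInvGlue, if_neg (not_le.mpr hpos), ← Real.exp_add]
      congr 1
      have hne : (1 : ℝ) - x ^ 2 ≠ 0 := ne_of_gt hpos
      field_simp
      ring
    · have hx2 : (1 : ℝ) ≤ x ^ 2 := by
        have := sq_abs x
        nlinarith [h]
      rw [hφ₂ x h, expNegInvGlue.zero_of_nonpos (by linarith), mul_zero]
  have hφcont : Continuous φ := by
    have : Continuous fun x : ℝ => Real.exp 1 * expNegInvGlue (1 - x ^ 2) :=
      continuous_const.mul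
        ((expNegInvGlue.contDiff (n := 1)).continuous.comp (by continuity))
    exact (funext hφeq : φ = _) ▸ this
  -- |φ| ≤ 1
  have hφle : ∀ y : ℝ, |φ y| ≤ 1 := by
    intro y
    rcases lt_or_ge (|y|) 1 with h | h
    · have hpos : 0 < 1 - y ^ 2 := by
        have h' := abs_lt.mp h; nlinarith [h'.1, h'.2]
      rw [hφ₁ y h, abs_of_pos (Real.exp_pos _)]
      have : -(y ^ 2 / (1 - y ^ 2)) ≤ 0 := by
        have : 0 ≤ y ^ 2 / (1 - y ^ 2) := div_nonneg (sq_nonneg y) hpos.le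
        linarith
      calc Real.exp (-(y ^ 2 / (1 - y ^ 2))) ≤ Real.exp 0 := Real.exp_le_exp.mpr this
        _ = 1 := Real.exp_zero
    · rw [hφ₂ y h]; norm_num
  -- summable bound
  have hsum : Summable (fun n : ℕ => (4 : ℝ) ^ (-(a n : ℤ))) := by
    have hg : Summable (fun k : ℕ => ((4 : ℝ)⁻¹) ^ k) :=
      summable_geometric_of_lt_one (by norm_num) (by norm_num)
    have := hg.comp_injective hinj
    convert this using 2 with n
    · rfl
    simp [zpow_neg, zpow_natCast, inv_pow]
  have hbound : ∀ (n : ℕ) (x : ℝ), ‖ψ n x‖ ≤ (4 : ℝ) ^ (-(a n : ℤ)) := by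
    intro n x
    rw [hψ n x]
    have h4 : (0 : ℝ) < (4 : ℝ) ^ (-(a n : ℤ)) := zpow_pos (by norm_num) _
    rw [Real.norm_eq_abs, abs_mul, abs_of_pos h4]
    calc (4 : ℝ) ^ (-(a n : ℤ)) * |φ _| ≤ (4 : ℝ) ^ (-(a n : ℤ)) * 1 :=
          mul_le_mul_of_nonneg_left (hφle _) h4.le
      _ = (4 : ℝ) ^ (-(a n : ℤ)) := mul_one _
  have htu : TendstoUniformly (fun N : ℕ => fun x : ℝ => ∑ n ∈ Finset.range N, ψ n x)
      (fun x => ∑' n : ℕ, ψ n x) Filter.atTop := tendstoUniformly_tsum_nat hsum hbound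
  have hfeq : f' = fun x => ∑' n : ℕ, ψ n x := funext hf'
  refine ⟨hfeq ▸ htu, ?_, ?_, ?_⟩
  · -- continuity
    have hψcont : ∀ n : ℕ, Continuous (ψ n) := by
      intro n
      have : Continuous fun x : ℝ =>
          (4 : ℝ) ^ (-(a n : ℤ)) *
            φ ((2 : ℝ) ^ (n + a n + 2) * (x - (2 : ℝ) ^ (-(a n : ℤ)))) :=
        continuous_const.mul (hφcont.comp (by continuity))
      exact (funext (hψ n) : ψ n = _) ▸ this
    rw [hfeq]
    exact htu.continuous (Filter.Eventually.of_forall fun N =>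
      continuous_finset_sum _ fun n _ => hψcont n).frequently
  · -- vanishing for x ≥ 5/4
    intro x hx
    rw [hf' x]
    have h0 : ∀ n : ℕ, ψ n x = 0 := by
      intro n
      rw [hψ n x]
      have hq : (2 : ℝ) ^ (-(a n : ℤ)) ≤ 1 :=
        zpow_le_one_of_nonpos₀ (by norm_num) (by simp)
      have hp : (4 : ℝ) ≤ (2 : ℝ) ^ (n + a n + 2) := by
        calc (4 : ℝ) = 2 ^ 2 := by norm_num
          _ ≤ 2 ^ (n + a n + 2) := pow_le_pow_right₀ (by norm_num) (by omega)
      have hxq : (1 : ℝ) / 4 ≤ x - (2 : ℝ) ^ (-(a n : ℤ)) := by linarith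
      have harg : (1 : ℝ) ≤ (2 : ℝ) ^ (n + a n + 2) * (x - (2 : ℝ) ^ (-(a n : ℤ))) := by
        calc (1 : ℝ) = 4 * (1 / 4) := by norm_num
          _ ≤ (2 : ℝ) ^ (n + a n + 2) * (x - (2 : ℝ) ^ (-(a n : ℤ))) :=
            mul_le_mul hp hxq (by norm_num) (by linarith)
      rw [hφ₂ _ (le_trans harg (le_abs_self _)), mul_zero]
    simp [h0]
  · -- vanishing for x ≤ 0
    intro x hx
    rw [hf' x]
    have h0 : ∀ n : ℕ, ψ n x = 0 := by
      intro n
      rw [hψ n x]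
      have hp : (0 : ℝ) < (2 : ℝ) ^ (n + a n + 2) := by positivity
      have hpq : (4 : ℝ) ≤ (2 : ℝ) ^ (n + a n + 2) * (2 : ℝ) ^ (-(a n : ℤ)) := by
        have : (2 : ℝ) ^ (n + a n + 2) * (2 : ℝ) ^ (-(a n : ℤ))
            = (2 : ℝ) ^ ((n : ℤ) + 2) := by
          rw [← zpow_natCast (2 : ℝ) (n + a n + 2), ← zpow_add₀ (by norm_num : (2:ℝ) ≠ 0)]
          congr 1
          push_cast
          ring
        rw [this]
        calc (4 : ℝ) = (2 : ℝ) ^ (2 : ℤ) := by norm_num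
          _ ≤ (2 : ℝ) ^ ((n : ℤ) + 2) := by
            apply zpow_le_zpow_right₀ (by norm_num)
            omega
      have hpx : (2 : ℝ) ^ (n + a n + 2) * x ≤ 0 :=
        mul_nonpos_of_nonneg_of_nonpos hp.le hx
      have harg : (2 : ℝ) ^ (n + a n + 2) * (x - (2 : ℝ) ^ (-(a n : ℤ))) ≤ -1 := by
        have hexp : (2 : ℝ) ^ (n + a n + 2) * (x - (2 : ℝ) ^ (-(a n : ℤ)))
            = (2 : ℝ) ^ (n + a n + 2) * x
              - (2 : ℝ) ^ (n + a n + 2) * (2 : ℝ) ^ (-(a n : ℤ)) := by ring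
        linarith [hexp ▸ le_refl ((2 : ℝ) ^ (n + a n + 2) * (x - (2 : ℝ) ^ (-(a n : ℤ)))),
          hexp]
      have : (1 : ℝ) ≤ |(2 : ℝ) ^ (n + a n + 2) * (x - (2 : ℝ) ^ (-(a n : ℤ)))| :=
        le_abs.mpr (Or.inr (by linarith))
      rw [hφ₂ _ this, mul_zero]
    simp [h0]
end

section
/- For every j ∈ ℕ, f'(2^{−j}) = 4^{−j} if j ∈ A, and f'(2^{−j}) = 0 if j ∉ A. -/
lemma pow_diff_abs (p q : ℤ) (hq : q < p) (hp : 1 ≤ p) :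
    (1 : ℝ) ≤ |(2 : ℝ) ^ q - (2 : ℝ) ^ p| := by
  have h2 : (1:ℝ) < 2 := one_lt_two
  have hlt : (2:ℝ) ^ q < 2 ^ p := zpow_lt_zpow_right₀ h2 hq
  rw [abs_sub_comm, abs_of_pos (by linarith)]
  have hq' : q ≤ p - 1 := by omega
  have h1 : (2:ℝ) ^ q ≤ 2 ^ (p-1) := zpow_le_zpow_right₀ (le_of_lt h2) hq'
  have h2' : (2:ℝ) ^ (p-1) * 2 = 2 ^ p := by
    rw [← zpow_add_one₀ (by norm_num : (2:ℝ) ≠ 0)]; ring_nf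
  have h3 : (1:ℝ) ≤ 2 ^ (p-1) := one_le_zpow₀ (le_of_lt h2) (by omega)
  nlinarith

lemma key_zero (j m n : ℕ) (h : m ≠ j) :
    (1 : ℝ) ≤ |(2 : ℝ) ^ (n + m + 2) * ((2 : ℝ) ^ (-(j : ℤ)) - (2 : ℝ) ^ (-(m : ℤ)))| := by
  have h0 : ((2:ℝ) : ℝ) ≠ 0 := by norm_num
  have hN : ((2:ℝ)) ^ (n + m + 2) = (2:ℝ) ^ ((n:ℤ) + m + 2) := by
    rw [← zpow_natCast]; norm_num
  rw [hN, mul_sub, ← zpow_add₀ h0, ← zpow_add₀ h0]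
  rcases lt_or_gt_of_ne h with hlt | hgt
  · -- m < j : exponent of second term bigger
    apply pow_diff_abs <;> omega
  · rw [abs_sub_comm]
    apply pow_diff_abs <;> omega

/-- For every j : f'(2^{−j}) = 4^{−j} if j ∈ A, and f'(2^{−j}) = 0 if j ∉ A. -/
theorem blip_series_values (a : ℕ → ℕ) (ha : Computable a)
    (hinj : Function.Injective a)
    (φ : ℝ → ℝ)
    (hφ₁ : ∀ x : ℝ, |x| < 1 → φ x = Real.exp (-(x ^ 2 / (1 - x ^ 2))))
    (hφ₂ : ∀ x : ℝ, 1 ≤ |x| → φ x = 0)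
    (ψ : ℕ → ℝ → ℝ)
    (hψ : ∀ n : ℕ, ∀ x : ℝ, ψ n x =
      (4 : ℝ) ^ (-(a n : ℤ)) * φ ((2 : ℝ) ^ (n + a n + 2) * (x - (2 : ℝ) ^ (-(a n : ℤ)))))
    (f' : ℝ → ℝ) (hf' : ∀ x : ℝ, f' x = ∑' n : ℕ, ψ n x) :
    ∀ j : ℕ,
      (j ∈ Set.range a → f' ((2 : ℝ) ^ (-(j : ℤ))) = (4 : ℝ) ^ (-(j : ℤ))) ∧
      (j ∉ Set.range a → f' ((2 : ℝ) ^ (-(j : ℤ))) = 0) := by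
  intro j
  have hzero : ∀ n : ℕ, a n ≠ j → ψ n ((2 : ℝ) ^ (-(j : ℤ))) = 0 := by
    intro n hne
    rw [hψ, hφ₂ _ (key_zero j (a n) n hne), mul_zero]
  have hφ0 : φ 0 = 1 := by
    rw [hφ₁ 0 (by norm_num)]; norm_num
  constructor
  · rintro ⟨m, rfl⟩
    rw [hf', tsum_eq_single m (fun n hn => hzero n (fun h => hn (hinj h)))]
    rw [hψ, sub_self, mul_zero, hφ0, mul_one]
  · intro hj
    rw [hf']
    have : ∀ n : ℕ, ψ n ((2 : ℝ) ^ (-(j : ℤ))) = 0 := fun n =>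
      hzero n (fun h => hj ⟨n, h⟩)
    simp only [this, tsum_zero]
end

section
/- The series Σ_{n=0}^∞ Φ_n(x) converges uniformly on ℝ; its sum f satisfies 0 ≤ f(x) ≤ 2 for all x ∈ ℝ, and f is differentiable everywhere with derivative f'(x) = Σ_{n=0}^∞ ψ_n(x) at every point x ∈ ℝ. -/
open MeasureTheory intervalIntegral

private lemma blip_integral_bound {g : ℝ → ℝ} (hg : Continuous g) {M p q : ℝ}
    (hpq : p ≤ q) (hp : 0 ≤ p) (hg0 : ∀ t, 0 ≤ g t) (hgM : ∀ t, g t ≤ M)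
    (hsupp : ∀ t, t ≤ p ∨ q ≤ t → g t = 0) (x : ℝ) :
    0 ≤ (∫ t in (0:ℝ)..x, g t) ∧ (∫ t in (0:ℝ)..x, g t) ≤ M * (q - p) := by
  have hint : ∀ a b : ℝ, IntervalIntegrable g volume a b := fun a b =>
    hg.intervalIntegrable a b
  have hnn : ∀ a b : ℝ, a ≤ b → 0 ≤ ∫ t in a..b, g t := fun a b hab =>
    intervalIntegral.integral_nonneg hab (fun u _ => hg0 u)
  have hzero : ∀ a b : ℝ, (∀ t ∈ Set.uIcc a b, g t = 0) → (∫ t in a..b, g t) = 0 := by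
    intro a b h
    rw [intervalIntegral.integral_congr (g := fun _ => (0:ℝ)) h]
    simp
  have hGq : (∫ t in (0:ℝ)..q, g t) ≤ M * (q - p) := by
    rw [← intervalIntegral.integral_add_adjacent_intervals (hint 0 p) (hint p q)]
    have h1 : (∫ t in (0:ℝ)..p, g t) = 0 := by
      apply hzero
      intro t ht
      rw [Set.uIcc_of_le hp] at ht
      exact hsupp t (Or.inl ht.2)
    have h2 : (∫ t in p..q, g t) ≤ ∫ _t in p..q, M := by
      apply intervalIntegral.integral_mono_on hpq (hint p q) intervalIntegrable_const
      intro t _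
      exact hgM t
    rw [intervalIntegral.integral_const, smul_eq_mul] at h2
    linarith
  constructor
  · rcases le_or_gt 0 x with hx | hx
    · exact hnn 0 x hx
    · rw [intervalIntegral.integral_symm]
      have : (∫ t in x..(0:ℝ), g t) = 0 := by
        apply hzero
        intro t ht
        rw [Set.uIcc_of_le hx.le] at ht
        exact hsupp t (Or.inl (ht.2.trans hp))
      rw [this]
      norm_num
  · rcases le_total x q with hx | hx
    · have hsplit : (∫ t in (0:ℝ)..x, g t) + (∫ t in x..q, g t) = ∫ t in (0:ℝ)..q, g t :=
        intervalIntegral.integral_add_adjacent_intervals (hint 0 x) (hint x q)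
      have := hnn x q hx
      linarith
    · have hsplit : (∫ t in (0:ℝ)..q, g t) + (∫ t in q..x, g t) = ∫ t in (0:ℝ)..x, g t :=
        intervalIntegral.integral_add_adjacent_intervals (hint 0 q) (hint q x)
      have h0 : (∫ t in q..x, g t) = 0 := by
        apply hzero
        intro t ht
        rw [Set.uIcc_of_le hx] at ht
        exact hsupp t (Or.inr ht.1)
      linarith

/-- Σ Φ_n converges uniformly on ℝ; the sum f satisfies 0 ≤ f ≤ 2 and f is
differentiable everywhere with derivative f'(x) = Σ ψ_n(x). -/
theorem integrated_blip_series (a : ℕ → ℕ) (ha : Computable a)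
    (hinj : Function.Injective a)
    (φ : ℝ → ℝ)
    (hφ₁ : ∀ x : ℝ, |x| < 1 → φ x = Real.exp (-(x ^ 2 / (1 - x ^ 2))))
    (hφ₂ : ∀ x : ℝ, 1 ≤ |x| → φ x = 0)
    (ψ : ℕ → ℝ → ℝ)
    (hψ : ∀ n : ℕ, ∀ x : ℝ, ψ n x =
      (4 : ℝ) ^ (-(a n : ℤ)) * φ ((2 : ℝ) ^ (n + a n + 2) * (x - (2 : ℝ) ^ (-(a n : ℤ)))))
    (Φ : ℕ → ℝ → ℝ) (hΦ : ∀ n : ℕ, ∀ x : ℝ, Φ n x = ∫ t in (0 : ℝ)..x, ψ n t)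
    (f' : ℝ → ℝ) (hf' : ∀ x : ℝ, f' x = ∑' n : ℕ, ψ n x)
    (f : ℝ → ℝ) (hf : ∀ x : ℝ, f x = ∑' n : ℕ, Φ n x) :
    TendstoUniformly (fun N : ℕ => fun x : ℝ => ∑ n ∈ Finset.range N, Φ n x) f
        Filter.atTop ∧
      (∀ x : ℝ, 0 ≤ f x ∧ f x ≤ 2) ∧ (∀ x : ℝ, HasDerivAt f (f' x) x) := by
  -- φ in terms of expNegInvGlue
  have hφeq : ∀ x : ℝ, φ x = Real.exp 1 * expNegInvGlue (1 - x ^ 2) := by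
    intro x
    rcases lt_or_ge |x| 1 with h | h
    · have hx2 : x ^ 2 < 1 := by nlinarith [abs_nonneg x, sq_abs x]
      have hpos : (0:ℝ) < 1 - x ^ 2 := by linarith
      rw [hφ₁ x h]
      simp only [expNegInvGlue]
      rw [if_neg (not_le.mpr hpos), ← Real.exp_add]
      congr 1
      field_simp
      ring
    · have hx2 : (1:ℝ) ≤ x ^ 2 := by nlinarith [sq_abs x, abs_nonneg x]
      rw [hφ₂ x h, expNegInvGlue.zero_of_nonpos (by linarith), mul_zero]
  have hφcont : Continuous φ := by
    have : φ = fun x => Real.exp 1 * expNegInvGlue (1 - x ^ 2) := funext hφeq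
    rw [this]
    exact continuous_const.mul
      ((expNegInvGlue.contDiff (n := 1)).continuous.comp (by continuity))
  have hφ0 : ∀ x : ℝ, 0 ≤ φ x := by
    intro x
    rw [hφeq x]
    exact mul_nonneg (Real.exp_pos 1).le (expNegInvGlue.nonneg _)
  have hφle1 : ∀ x : ℝ, φ x ≤ 1 := by
    intro x
    rcases lt_or_ge |x| 1 with h | h
    · have hx2 : x ^ 2 < 1 := by nlinarith [abs_nonneg x, sq_abs x]
      rw [hφ₁ x h, Real.exp_le_one_iff]
      have : (0:ℝ) ≤ x ^ 2 / (1 - x ^ 2) := div_nonneg (sq_nonneg x) (by linarith)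
      linarith
    · rw [hφ₂ x h]; norm_num
  -- per-n facts
  have key : ∀ n : ℕ, Continuous (ψ n) ∧ (∀ x : ℝ, 0 ≤ ψ n x ∧ ψ n x ≤ (1/4:ℝ) ^ a n)
      ∧ (∀ x : ℝ, 0 ≤ Φ n x ∧ Φ n x ≤ (1/2:ℝ) ^ (n + 1)) := by
    intro n
    set c : ℝ := (2 : ℝ) ^ (-(a n : ℤ)) with hc
    set s : ℝ := (2 : ℝ) ^ (n + a n + 2) with hs
    set M : ℝ := (4 : ℝ) ^ (-(a n : ℤ)) with hM
    have hspos : (0:ℝ) < s := by positivity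
    have hceq : c = ((2:ℝ) ^ a n)⁻¹ := by rw [hc, zpow_neg, zpow_natCast]
    have hMeq : M = ((4:ℝ) ^ a n)⁻¹ := by rw [hM, zpow_neg, zpow_natCast]
    have hM14 : M = (1/4:ℝ) ^ a n := by rw [hMeq, one_div, inv_pow]
    have hM0 : (0:ℝ) ≤ M := by rw [hMeq]; positivity
    have hM1 : M ≤ 1 := by
      rw [hMeq]
      rw [inv_le_one_iff₀]
      right
      exact one_le_pow₀ (by norm_num)
    set δ : ℝ := s⁻¹ with hδ
    have hδpos : (0:ℝ) < δ := by positivity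
    have hδc : δ ≤ c := by
      rw [hδ, hceq, hs]
      apply inv_anti₀ (by positivity)
      exact pow_le_pow_right₀ (by norm_num) (by omega)
    have hpq : c - δ ≤ c + δ := by linarith
    have hp0 : (0:ℝ) ≤ c - δ := by linarith
    have hψc : Continuous (ψ n) := by
      have : ψ n = fun x => M * φ (s * (x - c)) := funext (fun x => hψ n x)
      rw [this]
      exact continuous_const.mul
        (hφcont.comp (continuous_const.mul (continuous_id.sub continuous_const)))
    have hψ0 : ∀ x : ℝ, 0 ≤ ψ n x := by
      intro x
      rw [hψ n x]
      exact mul_nonneg hM0 (hφ0 _)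
    have hψM : ∀ x : ℝ, ψ n x ≤ M := by
      intro x
      rw [hψ n x]
      calc M * φ (s * (x - c)) ≤ M * 1 := mul_le_mul_of_nonneg_left (hφle1 _) hM0
        _ = M := mul_one M
    have hsupp : ∀ t : ℝ, t ≤ c - δ ∨ c + δ ≤ t → ψ n t = 0 := by
      intro t ht
      rw [hψ n t]
      have hd : δ ≤ |t - c| := by
        rcases ht with h | h
        · exact le_abs.mpr (Or.inr (by linarith))
        · exact le_abs.mpr (Or.inl (by linarith))
      have h1 : 1 ≤ |s * (t - c)| := by
        rw [abs_mul, abs_of_pos hspos]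
        calc (1:ℝ) = s * δ := by rw [hδ]; field_simp
          _ ≤ s * |t - c| := mul_le_mul_of_nonneg_left hd hspos.le
      rw [hφ₂ _ h1, mul_zero]
    have hb := fun x => blip_integral_bound hψc hpq hp0 hψ0 hψM hsupp x
    refine ⟨hψc, fun x => ⟨hψ0 x, (hψM x).trans (le_of_eq hM14)⟩, fun x => ?_⟩
    have hbx := hb x
    rw [← hΦ n x] at hbx
    refine ⟨hbx.1, hbx.2.trans ?_⟩
    have hqp : c + δ - (c - δ) = 2 * δ := by ring
    rw [hqp]
    have h2δ : 2 * δ ≤ ((2:ℝ) ^ (n + 1))⁻¹ := by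
      rw [hδ, hs]
      rw [show n + a n + 2 = (n + a n + 1) + 1 from rfl, pow_succ]
      rw [mul_inv]
      have h1 : ((2:ℝ) ^ (n + a n + 1))⁻¹ ≤ ((2:ℝ) ^ (n + 1))⁻¹ := by
        apply inv_anti₀ (by positivity)
        exact pow_le_pow_right₀ (by norm_num) (by omega)
      calc 2 * (((2:ℝ) ^ (n + a n + 1))⁻¹ * 2⁻¹) = ((2:ℝ) ^ (n + a n + 1))⁻¹ := by ring
        _ ≤ ((2:ℝ) ^ (n + 1))⁻¹ := h1
    calc M * (2 * δ) ≤ 1 * ((2:ℝ) ^ (n + 1))⁻¹ :=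
          mul_le_mul hM1 h2δ (by linarith) (by norm_num)
      _ = (1/2:ℝ) ^ (n + 1) := by rw [one_mul, one_div, inv_pow]
  have hψcont := fun n => (key n).1
  have hψ0 := fun n x => ((key n).2.1 x).1
  have hψle := fun n x => ((key n).2.1 x).2
  have hΦ0 := fun n x => ((key n).2.2 x).1
  have hΦle := fun n x => ((key n).2.2 x).2
  -- summable bounds
  have hu : Summable (fun n : ℕ => (1/2:ℝ) ^ (n + 1)) :=
    (summable_geometric_of_lt_one (by norm_num) (by norm_num : (1/2:ℝ) < 1)).comp_injective
      Nat.succ_injective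
  have hv : Summable (fun n : ℕ => (1/4:ℝ) ^ a n) :=
    (summable_geometric_of_lt_one (by norm_num) (by norm_num : (1/4:ℝ) < 1)).comp_injective hinj
  have hΦnorm : ∀ (n : ℕ) (x : ℝ), ‖Φ n x‖ ≤ (1/2:ℝ) ^ (n + 1) := by
    intro n x
    rw [Real.norm_eq_abs, abs_of_nonneg (hΦ0 n x)]
    exact hΦle n x
  have hψnorm : ∀ (n : ℕ) (x : ℝ), ‖ψ n x‖ ≤ (1/4:ℝ) ^ a n := by
    intro n x
    rw [Real.norm_eq_abs, abs_of_nonneg (hψ0 n x)]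
    exact hψle n x
  have hΦd : ∀ (n : ℕ) (x : ℝ), HasDerivAt (Φ n) (ψ n x) x := by
    intro n x
    have he : Φ n = fun y => ∫ t in (0:ℝ)..y, ψ n t := funext (hΦ n)
    rw [he]
    exact ((hψcont n).integral_hasStrictDerivAt 0 x).hasDerivAt
  have hfe : f = fun x => ∑' n : ℕ, Φ n x := funext hf
  have hΦsum : ∀ x : ℝ, Summable (fun n => Φ n x) := fun x =>
    Summable.of_nonneg_of_le (fun n => hΦ0 n x) (fun n => hΦle n x) hu
  refine ⟨?_, ?_, ?_⟩
  · rw [hfe]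
    exact tendstoUniformly_tsum_nat hu hΦnorm
  · intro x
    rw [hf x]
    constructor
    · exact tsum_nonneg (fun n => hΦ0 n x)
    · calc (∑' n : ℕ, Φ n x) ≤ ∑' n : ℕ, (1/2:ℝ) ^ (n + 1) :=
            Summable.tsum_le_tsum (fun n => hΦle n x) (hΦsum x) hu
        _ ≤ ∑' n : ℕ, (1/2:ℝ) ^ n := by
            apply Summable.tsum_le_tsum _ hu (summable_geometric_of_lt_one (by norm_num) (by norm_num))
            intro n
            exact pow_le_pow_of_le_one (by norm_num) (by norm_num) (Nat.le_succ n)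
        _ = 2 := by
            rw [tsum_geometric_of_lt_one (by norm_num) (by norm_num)]
            norm_num
  · intro x
    have hsum0 : Summable (fun n => Φ n 0) := by
      have : (fun n => Φ n 0) = fun _ => (0:ℝ) := by
        funext n
        rw [hΦ n 0, intervalIntegral.integral_same]
      rw [this]
      exact summable_zero
    have h3 := hasDerivAt_tsum hv hΦd hψnorm hsum0 x
    rw [hfe, hf' x]
    exact h3
end

section
/- For j ∈ A, the function f_j defined by f_j(x) = f(x) − Φ_{ν(j)}(x) satisfies: f_j is differentiable at 2^{−j} with derivative 0 there, and 0 ≤ f(x) − f_j(x) ≤ 2^{−ν(j)} for all x ∈ ℝ (so the uniform distance between f and f_j is at most 2^{−ν(j)}). -/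
section
variable (φ : ℝ → ℝ)
    (hφ₁ : ∀ x : ℝ, |x| < 1 → φ x = Real.exp (-(x ^ 2 / (1 - x ^ 2))))
    (hφ₂ : ∀ x : ℝ, 1 ≤ |x| → φ x = 0)

include hφ₁ hφ₂ in
lemma phi_nonneg (x : ℝ) : 0 ≤ φ x := by
  rcases lt_or_ge |x| 1 with h | h
  · rw [hφ₁ x h]; positivity
  · rw [hφ₂ x h]

include hφ₁ hφ₂ in
lemma phi_le_one (x : ℝ) : φ x ≤ 1 := by
  rcases lt_or_ge |x| 1 with h | h
  · rw [hφ₁ x h]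
    have h1 : x ^ 2 < 1 := by
      have := abs_lt.mp h; nlinarith [this.1, this.2]
    have : 0 ≤ x ^ 2 / (1 - x ^ 2) := div_nonneg (sq_nonneg x) (by linarith)
    calc Real.exp (-(x ^ 2 / (1 - x ^ 2))) ≤ Real.exp 0 := Real.exp_le_exp.mpr (by linarith)
    _ = 1 := Real.exp_zero
  · rw [hφ₂ x h]; norm_num

include hφ₁ hφ₂ in
lemma phi_meas : Measurable φ := by
  have : φ = fun x => if |x| < 1 then Real.exp (-(x ^ 2 / (1 - x ^ 2))) else 0 := by
    funext x
    split_ifs with h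
    · exact hφ₁ x h
    · exact hφ₂ x (le_of_not_gt h)
  rw [this]
  apply Measurable.ite
  · exact measurableSet_lt (by fun_prop) measurable_const
  · fun_prop
  · fun_prop

end

section
variable (a : ℕ → ℕ) (φ : ℝ → ℝ) (ψ : ℕ → ℝ → ℝ)
    (hφnn : ∀ x : ℝ, 0 ≤ φ x) (hφ1 : ∀ x : ℝ, φ x ≤ 1)
    (hφ₂ : ∀ x : ℝ, 1 ≤ |x| → φ x = 0) (hφm : Measurable φ)
    (hψ : ∀ n : ℕ, ∀ x : ℝ, ψ n x =
      (4 : ℝ) ^ (-(a n : ℤ)) * φ ((2 : ℝ) ^ (n + a n + 2) * (x - (2 : ℝ) ^ (-(a n : ℤ)))))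

include hψ hφnn in
lemma psi_nonneg (n : ℕ) (x : ℝ) : 0 ≤ ψ n x := by
  rw [hψ]
  have := hφnn ((2 : ℝ) ^ (n + a n + 2) * (x - (2 : ℝ) ^ (-(a n : ℤ))))
  positivity

include hψ hφnn hφ1 in
lemma psi_le (n : ℕ) (x : ℝ) : ψ n x ≤ (4 : ℝ) ^ (-(a n : ℤ)) := by
  rw [hψ]
  have h1 := hφ1 ((2 : ℝ) ^ (n + a n + 2) * (x - (2 : ℝ) ^ (-(a n : ℤ))))
  have h2 : (0:ℝ) < (4 : ℝ) ^ (-(a n : ℤ)) := by positivity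
  nlinarith

include hψ hφ₂ in
lemma psi_zero (n : ℕ) (x : ℝ)
    (h : ((2:ℝ) ^ (n + a n + 2))⁻¹ ≤ |x - (2 : ℝ) ^ (-(a n : ℤ))|) : ψ n x = 0 := by
  rw [hψ]
  rw [hφ₂, mul_zero]
  rw [abs_mul, abs_of_pos (by positivity : (0:ℝ) < (2 : ℝ) ^ (n + a n + 2))]
  calc (1:ℝ) = 2 ^ (n + a n + 2) * ((2:ℝ) ^ (n + a n + 2))⁻¹ :=
        (mul_inv_cancel₀ (by positivity)).symm
    _ ≤ 2 ^ (n + a n + 2) * |x - 2 ^ (-(a n:ℤ))| := by gcongr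

include hψ hφm in
lemma psi_meas (n : ℕ) : Measurable (ψ n) := by
  have : ψ n = fun x => (4 : ℝ) ^ (-(a n : ℤ)) *
      φ ((2 : ℝ) ^ (n + a n + 2) * (x - (2 : ℝ) ^ (-(a n : ℤ)))) := funext (hψ n)
  rw [this]
  fun_prop

include hψ hφm hφnn hφ1 in
lemma psi_ii (n : ℕ) (u v : ℝ) : IntervalIntegrable (ψ n) MeasureTheory.volume u v := by
  rw [intervalIntegrable_iff]
  apply MeasureTheory.Integrable.mono'
    ((MeasureTheory.integrableOn_const_iff (C := (4 : ℝ) ^ (-(a n : ℤ)))).mpr (Or.inr measure_Ioc_lt_top))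
    ((psi_meas a φ ψ hφm hψ n).aestronglyMeasurable.restrict)
  filter_upwards with x
  rw [Real.norm_eq_abs, abs_of_nonneg (psi_nonneg a φ ψ hφnn hψ n x)]
  exact psi_le a φ ψ hφnn hφ1 hψ n x

end

section
variable (a : ℕ → ℕ) (ψ : ℕ → ℝ → ℝ) (Φ : ℕ → ℝ → ℝ)
    (hψnn : ∀ n x, 0 ≤ ψ n x)
    (hψle : ∀ n x, ψ n x ≤ (4 : ℝ) ^ (-(a n : ℤ)))
    (hψz : ∀ n (x : ℝ), ((2:ℝ) ^ (n + a n + 2))⁻¹ ≤ |x - (2 : ℝ) ^ (-(a n : ℤ))| → ψ n x = 0)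
    (hψii : ∀ n (u v : ℝ), IntervalIntegrable (ψ n) MeasureTheory.volume u v)
    (hΦ : ∀ n : ℕ, ∀ x : ℝ, Φ n x = ∫ t in (0 : ℝ)..x, ψ n t)

-- basic facts about c and r
lemma rc_facts (n : ℕ) : 0 < ((2:ℝ) ^ (n + a n + 2))⁻¹ ∧
    4 * ((2:ℝ) ^ (n + a n + 2))⁻¹ ≤ (2 : ℝ) ^ (-(a n : ℤ)) := by
  constructor
  · positivity
  · rw [zpow_neg, zpow_natCast]
    rw [show n + a n + 2 = (n + 2) + a n by ring, pow_add]
    rw [mul_inv]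
    have h4 : (4:ℝ) ≤ 2 ^ (n + 2) := by
      calc (4:ℝ) = 2 ^ 2 := by norm_num
      _ ≤ 2 ^ (n+2) := by
          apply pow_le_pow_right₀ <;> norm_num
    have : ((2:ℝ) ^ (n+2))⁻¹ ≤ 4⁻¹ := by
      apply inv_anti₀ <;> norm_num
      exact h4
    calc 4 * (((2:ℝ) ^ (n+2))⁻¹ * ((2:ℝ) ^ (a n))⁻¹) ≤ 4 * (4⁻¹ * ((2:ℝ) ^ (a n))⁻¹) := by
          gcongr
      _ = ((2:ℝ) ^ (a n))⁻¹ := by ring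

include hΦ hψii in
lemma Phi_sub (n : ℕ) (u v : ℝ) : Φ n u - Φ n v = ∫ t in v..u, ψ n t := by
  rw [hΦ, hΦ]
  rw [intervalIntegral.integral_interval_sub_left (hψii n 0 u) (hψii n 0 v)]

include hΦ hψnn hψz in
lemma Phi_nonneg' (n : ℕ) (x : ℝ) : 0 ≤ Φ n x := by
  rw [hΦ]
  rcases le_or_gt 0 x with h | h
  · exact intervalIntegral.integral_nonneg h (fun u _ => hψnn n u)
  · rw [intervalIntegral.integral_symm]
    have : ∫ t in x..(0:ℝ), ψ n t = ∫ t in x..(0:ℝ), (0:ℝ) := by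
      apply intervalIntegral.integral_congr
      intro t ht
      rw [Set.uIcc_of_le (le_of_lt h)] at ht
      apply hψz
      have hc : (0:ℝ) < (2 : ℝ) ^ (-(a n : ℤ)) := by positivity
      have := (rc_facts a n).2
      have h1 : t ≤ 0 := ht.2
      rw [abs_sub_comm, abs_of_nonneg (by linarith)]
      linarith
    rw [this, intervalIntegral.integral_zero, neg_zero]

include hΦ hψnn hψle hψz hψii in
lemma Phi_le' (n : ℕ) (x : ℝ) :
    Φ n x ≤ (4 : ℝ) ^ (-(a n : ℤ)) * (2 * ((2:ℝ) ^ (n + a n + 2))⁻¹) := by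
  set c := (2 : ℝ) ^ (-(a n : ℤ)) with hcdef
  set r := ((2:ℝ) ^ (n + a n + 2))⁻¹ with hrdef
  obtain ⟨hr, hrc⟩ := rc_facts a n
  have hczero : ∀ t : ℝ, t ≤ c - r → ψ n t = 0 := by
    intro t ht
    apply hψz
    rw [abs_sub_comm, abs_of_nonneg (by linarith)]
    linarith
  have hczero' : ∀ t : ℝ, c + r ≤ t → ψ n t = 0 := by
    intro t ht
    apply hψz
    rw [abs_of_nonneg (by linarith)]
    linarith
  -- value at c + r
  have hval : Φ n (c + r) ≤ c * c * (2 * r) := by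
    rw [hΦ]
    have hsplit : ∫ t in (0:ℝ)..(c+r), ψ n t =
        (∫ t in (0:ℝ)..(c-r), ψ n t) + ∫ t in (c-r)..(c+r), ψ n t :=
      (intervalIntegral.integral_add_adjacent_intervals (hψii n 0 (c-r)) (hψii n (c-r) (c+r))).symm
    have h1 : ∫ t in (0:ℝ)..(c-r), ψ n t = 0 := by
      have : ∫ t in (0:ℝ)..(c-r), ψ n t = ∫ t in (0:ℝ)..(c-r), (0:ℝ) := by
        apply intervalIntegral.integral_congr
        intro t ht
        rw [Set.uIcc_of_le (by linarith)] at ht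
        exact hczero t ht.2
      rw [this, intervalIntegral.integral_zero]
    have h2 : ∫ t in (c-r)..(c+r), ψ n t ≤ ∫ t in (c-r)..(c+r), (4 : ℝ) ^ (-(a n : ℤ)) := by
      apply intervalIntegral.integral_mono_on (by linarith) (hψii n _ _) intervalIntegrable_const
      intro t _
      exact hψle n t
    have h3 : ∫ t in (c-r)..(c+r), (4 : ℝ) ^ (-(a n : ℤ)) = c * c * (2 * r) := by
      rw [intervalIntegral.integral_const, smul_eq_mul]
      have : (4 : ℝ) ^ (-(a n : ℤ)) = c * c := by
        rw [hcdef, show (4:ℝ) = (2:ℝ)^(2:ℤ) by norm_num, ← zpow_mul,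
          ← zpow_add₀ (by norm_num : (2:ℝ) ≠ 0)]
        congr 1; ring
      rw [this]; ring
    rw [hsplit, h1, zero_add]
    linarith
  have hbound : (4 : ℝ) ^ (-(a n : ℤ)) * (2 * r) = c * c * (2 * r) := by
    have : (4 : ℝ) ^ (-(a n : ℤ)) = c * c := by
      rw [hcdef, show (4:ℝ) = (2:ℝ)^(2:ℤ) by norm_num, ← zpow_mul,
        ← zpow_add₀ (by norm_num : (2:ℝ) ≠ 0)]
      congr 1; ring
    rw [this]
  rw [hbound]
  rcases le_or_gt x (c + r) with h | h
  · have : Φ n (c + r) - Φ n x = ∫ t in x..(c+r), ψ n t :=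
      Phi_sub ψ Φ hψii hΦ n (c+r) x
    have hnn : 0 ≤ ∫ t in x..(c+r), ψ n t :=
      intervalIntegral.integral_nonneg h (fun u _ => hψnn n u)
    linarith
  · have heq : Φ n x - Φ n (c + r) = ∫ t in (c+r)..x, ψ n t :=
      Phi_sub ψ Φ hψii hΦ n x (c+r)
    have : ∫ t in (c+r)..x, ψ n t = ∫ t in (c+r)..x, (0:ℝ) := by
      apply intervalIntegral.integral_congr
      intro t ht
      rw [Set.uIcc_of_le (le_of_lt h)] at ht
      exact hczero' t ht.1
    rw [this, intervalIntegral.integral_zero] at heq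
    linarith

end

/-- For j ∈ A, the function f_j(x) = f(x) − Φ_{ν(j)}(x) has derivative 0 at 2^{−j},
and 0 ≤ f(x) − f_j(x) ≤ 2^{−ν(j)} for all x. -/
theorem perturbed_function (a : ℕ → ℕ) (ha : Computable a)
    (hinj : Function.Injective a)
    (φ : ℝ → ℝ)
    (hφ₁ : ∀ x : ℝ, |x| < 1 → φ x = Real.exp (-(x ^ 2 / (1 - x ^ 2))))
    (hφ₂ : ∀ x : ℝ, 1 ≤ |x| → φ x = 0)
    (ψ : ℕ → ℝ → ℝ)
    (hψ : ∀ n : ℕ, ∀ x : ℝ, ψ n x =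
      (4 : ℝ) ^ (-(a n : ℤ)) * φ ((2 : ℝ) ^ (n + a n + 2) * (x - (2 : ℝ) ^ (-(a n : ℤ)))))
    (Φ : ℕ → ℝ → ℝ) (hΦ : ∀ n : ℕ, ∀ x : ℝ, Φ n x = ∫ t in (0 : ℝ)..x, ψ n t)
    (f : ℝ → ℝ) (hf : ∀ x : ℝ, f x = ∑' n : ℕ, Φ n x)
    (j : ℕ) (hj : ∃ n : ℕ, a n = j)
    (fj : ℝ → ℝ) (hfj : ∀ x : ℝ, fj x = f x - Φ (Nat.find hj) x) :
    HasDerivAt fj 0 ((2 : ℝ) ^ (-(j : ℤ))) ∧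
      ∀ x : ℝ, 0 ≤ f x - fj x ∧ f x - fj x ≤ (2 : ℝ) ^ (-(Nat.find hj : ℤ)) := by
  have hφnn := phi_nonneg φ hφ₁ hφ₂
  have hφ1 := phi_le_one φ hφ₁ hφ₂
  have hφm := phi_meas φ hφ₁ hφ₂
  have hψnn := psi_nonneg a φ ψ hφnn hψ
  have hψle := psi_le a φ ψ hφnn hφ1 hψ
  have hψz := psi_zero a φ ψ hφ₂ hψ
  have hψii := psi_ii a φ ψ hφnn hφ1 hφm hψ
  have hΦnn := Phi_nonneg' a ψ Φ hψnn hψz hΦ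
  have hΦle := Phi_le' a ψ Φ hψnn hψle hψz hψii hΦ
  have hΦsub := Phi_sub ψ Φ hψii hΦ
  set m := Nat.find hj with hm
  have ham : a m = j := Nat.find_spec hj
  -- uniform bound
  have hb : ∀ n x, Φ n x ≤ ((1:ℝ)/2)^n := by
    intro n x
    refine (hΦle n x).trans ?_
    have h1 : (4:ℝ)^(-(a n : ℤ)) ≤ 1 := by
      rw [zpow_neg, zpow_natCast]
      exact inv_le_one_of_one_le₀ (one_le_pow₀ (by norm_num))
    have h2 : 2 * ((2:ℝ)^(n + a n + 2))⁻¹ ≤ ((1:ℝ)/2)^n := by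
      have hle : (2:ℝ)^(n+1) ≤ 2^(n + a n + 2) :=
        pow_le_pow_right₀ (by norm_num) (by omega)
      have hi : ((2:ℝ)^(n + a n + 2))⁻¹ ≤ ((2:ℝ)^(n+1))⁻¹ := by
        apply inv_anti₀ (by positivity) hle
      calc 2 * ((2:ℝ)^(n + a n + 2))⁻¹ ≤ 2 * ((2:ℝ)^(n+1))⁻¹ := by linarith
        _ = ((2:ℝ)^n)⁻¹ := by rw [pow_succ, mul_inv]; ring
        _ = ((1:ℝ)/2)^n := by rw [one_div, inv_pow]
    have h0 : (0:ℝ) ≤ 2 * ((2:ℝ)^(n + a n + 2))⁻¹ := by positivity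
    calc (4:ℝ)^(-(a n : ℤ)) * (2 * ((2:ℝ)^(n + a n + 2))⁻¹)
        ≤ 1 * ((1:ℝ)/2)^n := mul_le_mul h1 h2 h0 (by norm_num)
      _ = ((1:ℝ)/2)^n := one_mul _
  have hsum : ∀ x, Summable (fun n => Φ n x) := fun x =>
    Summable.of_nonneg_of_le (fun n => hΦnn n x) (fun n => hb n x)
      (summable_geometric_of_lt_one (by norm_num) (by norm_num))
  have hdiffval : ∀ x, f x - fj x = Φ m x := by
    intro x; rw [hfj]; ring
  constructor
  · -- derivative part
    set p := (2:ℝ)^(-(j:ℤ)) with hp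
    have hp0 : 0 < p := by positivity
    have hmem : p ∈ Set.Ioo (3/4*p) (5/4*p) := ⟨by nlinarith, by nlinarith⟩
    have key : ∀ t ∈ Set.Ioo (3/4*p) (5/4*p), ∀ n, n ≠ m → ψ n t = 0 := by
      intro t ht n hn
      have hk : a n ≠ j := fun h => hn (hinj (h.trans ham.symm))
      apply hψz
      have hrq := (rc_facts a n).2
      have hq0 : (0:ℝ) < (2:ℝ)^(-(a n : ℤ)) := by positivity
      rcases lt_or_gt_of_ne hk with hlt | hgt
      · -- a n < j : 2*p ≤ q, t < (5/8) q
        have h2p : 2 * p ≤ (2:ℝ)^(-(a n : ℤ)) := by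
          have : (2:ℝ)^(-(j:ℤ)+1) ≤ (2:ℝ)^(-(a n : ℤ)) :=
            zpow_le_zpow_right₀ (by norm_num) (by omega)
          rw [zpow_add₀ (by norm_num : (2:ℝ) ≠ 0), zpow_one] at this
          linarith
        rw [abs_sub_comm, abs_of_nonneg (by nlinarith [ht.2])]
        nlinarith [ht.2]
      · -- a n > j : 2*q ≤ p, t > (3/2) q
        have h2q : 2 * (2:ℝ)^(-(a n : ℤ)) ≤ p := by
          have : (2:ℝ)^(-(a n:ℤ)+1) ≤ (2:ℝ)^(-(j : ℤ)) :=
            zpow_le_zpow_right₀ (by norm_num) (by omega)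
          rw [zpow_add₀ (by norm_num : (2:ℝ) ≠ 0), zpow_one] at this
          linarith
        rw [abs_of_nonneg (by nlinarith [ht.1])]
        nlinarith [ht.1]
    have hconst : ∀ x ∈ Set.Ioo (3/4*p) (5/4*p), ∀ y ∈ Set.Ioo (3/4*p) (5/4*p),
        fj x = fj y := by
      intro x hx y hy
      have hdiff : ∀ n, n ≠ m → Φ n x - Φ n y = 0 := by
        intro n hn
        rw [hΦsub n x y]
        have hz : ∀ t ∈ Set.uIcc y x, ψ n t = (fun _ => (0:ℝ)) t := by
          intro t ht
          exact key t (Set.ordConnected_Ioo.uIcc_subset hy hx ht) n hn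
        rw [intervalIntegral.integral_congr hz, intervalIntegral.integral_zero]
      have ht1 : (∑' n, (Φ n x - Φ n y)) = (∑' n, Φ n x) - ∑' n, Φ n y :=
        Summable.tsum_sub (hsum x) (hsum y)
      have ht2 : (∑' n, (Φ n x - Φ n y)) = Φ m x - Φ m y :=
        tsum_eq_single m (fun n hn => hdiff n hn)
      have hxv : fj x = (∑' n, Φ n x) - Φ m x := by rw [hfj, hf]
      have hyv : fj y = (∑' n, Φ n y) - Φ m y := by rw [hfj, hf]
      rw [hxv, hyv]
      linarith
    have hev : fj =ᶠ[nhds p] fun _ => fj p := by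
      filter_upwards [Ioo_mem_nhds hmem.1 hmem.2] with x hx
      exact hconst x hx p hmem
    exact (hasDerivAt_const p (fj p)).congr_of_eventuallyEq hev
  · intro x
    rw [hdiffval x]
    refine ⟨hΦnn m x, (hb m x).trans_eq ?_⟩
    rw [zpow_neg, zpow_natCast, one_div, inv_pow]
end

section
/- For j ∈ A, near 2^{−j} the function f' consists of a single narrow blip: for every t ∈ ℝ with |t − 2^{−j}| ≤ 2^{−(j+2)} one has f'(t) = 4^{−j} φ(2^{ν(j)+j+2}(t − 2^{−j})); in particular f'(t) = 0 whenever 2^{−(ν(j)+j+2)} ≤ |t − 2^{−j}| ≤ 2^{−(j+2)}. -/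
lemma two_zpow_le' {m n : ℤ} (h : m ≤ n) : (2:ℝ)^m ≤ (2:ℝ)^n :=
  zpow_le_zpow_right₀ one_le_two h

lemma aux_sep (j k : ℕ) (hk : k ≠ j) (t : ℝ)
    (ht : |t - (2:ℝ)^(-(j:ℤ))| ≤ (2:ℝ)^(-((j:ℤ)+2))) (n : ℕ) :
    (2:ℝ)^(-((n:ℤ)+k+2)) ≤ |t - (2:ℝ)^(-(k:ℤ))| := by
  set c : ℝ := (2:ℝ)^(-(k:ℤ)) with hc
  set d : ℝ := (2:ℝ)^(-(j:ℤ)) with hd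
  have hcpos : (0:ℝ) < c := zpow_pos two_pos _
  have hdpos : (0:ℝ) < d := zpow_pos two_pos _
  have htri : |d - c| ≤ |d - t| + |t - c| := abs_sub_le d t c
  have habs : |d - t| = |t - d| := abs_sub_comm d t
  rcases lt_or_gt_of_ne hk with h | h
  · -- k < j
    have h1 : (2:ℝ)^(-((n:ℤ)+k+2)) ≤ (2:ℝ)^(-(k:ℤ)-2) := two_zpow_le' (by omega)
    have e2 : (2:ℝ)^(-(k:ℤ)-2) = c/4 := by
      rw [zpow_sub₀ (two_ne_zero), ← hc]; norm_num
    have e1 : (2:ℝ)^(-(k:ℤ)-1) = c/2 := by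
      rw [zpow_sub₀ (two_ne_zero), ← hc]; norm_num
    have e3 : (2:ℝ)^(-(k:ℤ)-3) = c/8 := by
      rw [zpow_sub₀ (two_ne_zero), ← hc]; norm_num
    have hdle : d ≤ c/2 := by
      rw [← e1]; exact two_zpow_le' (by omega)
    have htd : |t - d| ≤ c/8 := by
      refine ht.trans ?_
      rw [← e3]; exact two_zpow_le' (by omega)
    have hdc : |d - c| = c - d := by
      rw [abs_sub_comm, abs_of_nonneg (by linarith)]
    rw [hdc, habs] at htri
    linarith
  · -- j < k
    have h1 : (2:ℝ)^(-((n:ℤ)+k+2)) ≤ (2:ℝ)^(-(j:ℤ)-2) := two_zpow_le' (by omega)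
    have e2 : (2:ℝ)^(-(j:ℤ)-2) = d/4 := by
      rw [zpow_sub₀ (two_ne_zero), ← hd]; norm_num
    have e1 : (2:ℝ)^(-(j:ℤ)-1) = d/2 := by
      rw [zpow_sub₀ (two_ne_zero), ← hd]; norm_num
    have hcle : c ≤ d/2 := by
      rw [← e1]; exact two_zpow_le' (by omega)
    have htd : |t - d| ≤ d/4 := by
      refine ht.trans ?_
      rw [← e2]; exact two_zpow_le' (by omega)
    have hdc : |d - c| = d - c := abs_of_nonneg (by linarith)
    rw [hdc, habs] at htri
    linarith

/-- For j ∈ A, near 2^{−j} the sum f' consists of the single blip ψ_{ν(j)}: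
for |t − 2^{−j}| ≤ 2^{−(j+2)} one has f'(t) = 4^{−j} φ(2^{ν(j)+j+2}(t − 2^{−j}));
in particular f'(t) = 0 whenever 2^{−(ν(j)+j+2)} ≤ |t − 2^{−j}| ≤ 2^{−(j+2)}. -/
theorem single_blip_near (a : ℕ → ℕ) (ha : Computable a)
    (hinj : Function.Injective a)
    (φ : ℝ → ℝ)
    (hφ₁ : ∀ x : ℝ, |x| < 1 → φ x = Real.exp (-(x ^ 2 / (1 - x ^ 2))))
    (hφ₂ : ∀ x : ℝ, 1 ≤ |x| → φ x = 0)
    (ψ : ℕ → ℝ → ℝ)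
    (hψ : ∀ n : ℕ, ∀ x : ℝ, ψ n x =
      (4 : ℝ) ^ (-(a n : ℤ)) * φ ((2 : ℝ) ^ (n + a n + 2) * (x - (2 : ℝ) ^ (-(a n : ℤ)))))
    (f' : ℝ → ℝ) (hf' : ∀ x : ℝ, f' x = ∑' n : ℕ, ψ n x)
    (j : ℕ) (hj : ∃ n : ℕ, a n = j) :
    (∀ t : ℝ, |t - (2 : ℝ) ^ (-(j : ℤ))| ≤ (2 : ℝ) ^ (-((j : ℤ) + 2)) →
      f' t = (4 : ℝ) ^ (-(j : ℤ)) *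
        φ ((2 : ℝ) ^ (Nat.find hj + j + 2) * (t - (2 : ℝ) ^ (-(j : ℤ))))) ∧
    (∀ t : ℝ, (2 : ℝ) ^ (-((Nat.find hj : ℤ) + j + 2)) ≤ |t - (2 : ℝ) ^ (-(j : ℤ))| →
      |t - (2 : ℝ) ^ (-(j : ℤ))| ≤ (2 : ℝ) ^ (-((j : ℤ) + 2)) → f' t = 0) := by
  set n₀ := Nat.find hj with hn₀def
  have hn₀ : a n₀ = j := Nat.find_spec hj
  have key : ∀ t : ℝ, |t - (2 : ℝ) ^ (-(j : ℤ))| ≤ (2 : ℝ) ^ (-((j : ℤ) + 2)) →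
      f' t = (4 : ℝ) ^ (-(j : ℤ)) *
        φ ((2 : ℝ) ^ (n₀ + j + 2) * (t - (2 : ℝ) ^ (-(j : ℤ)))) := by
    intro t ht
    have ht' : |t - (2:ℝ)^(-(j:ℤ))| ≤ (2:ℝ)^(-((j:ℤ)+2)) := ht
    have hzero : ∀ n : ℕ, n ≠ n₀ → ψ n t = 0 := by
      intro n hn
      have hkj : a n ≠ j := fun hh => hn (hinj (hh.trans hn₀.symm))
      have hsep := aux_sep j (a n) hkj t ht' n
      rw [hψ]
      apply mul_eq_zero_of_right
      apply hφ₂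
      rw [abs_mul, abs_of_pos (pow_pos two_pos _)]
      have hM : (2:ℝ)^(n + a n + 2) * (2:ℝ)^(-((n:ℤ)+(a n)+2)) = 1 := by
        rw [← zpow_natCast (2:ℝ) (n + a n + 2), ← zpow_add₀ (two_ne_zero)]
        have hz : ((n + a n + 2 : ℕ) : ℤ) + (-((n:ℤ)+(a n)+2)) = 0 := by push_cast; ring
        rw [hz, zpow_zero]
      have := mul_le_mul_of_nonneg_left hsep (le_of_lt (pow_pos two_pos (n + a n + 2)))
      calc (1:ℝ) = (2:ℝ)^(n + a n + 2) * (2:ℝ)^(-((n:ℤ)+(a n)+2)) := hM.symm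
        _ ≤ (2:ℝ)^(n + a n + 2) * |t - (2:ℝ)^(-((a n):ℤ))| := this
    rw [hf', tsum_eq_single n₀ hzero, hψ, hn₀]
  refine ⟨key, ?_⟩
  intro t h1 h2
  rw [key t h2]
  rw [hφ₂, mul_zero]
  rw [abs_mul, abs_of_pos (pow_pos two_pos _)]
  have hM : (2:ℝ)^(n₀ + j + 2) * (2:ℝ)^(-((n₀:ℤ)+j+2)) = 1 := by
    rw [← zpow_natCast (2:ℝ) (n₀ + j + 2), ← zpow_add₀ (two_ne_zero)]
    have hz : ((n₀ + j + 2 : ℕ) : ℤ) + (-((n₀:ℤ)+j+2)) = 0 := by push_cast; ring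
    rw [hz, zpow_zero]
  have := mul_le_mul_of_nonneg_left h1 (le_of_lt (pow_pos two_pos (n₀ + j + 2)))
  calc (1:ℝ) = (2:ℝ)^(n₀ + j + 2) * (2:ℝ)^(-((n₀:ℤ)+j+2)) := hM.symm
    _ ≤ (2:ℝ)^(n₀ + j + 2) * |t - (2:ℝ)^(-(j:ℤ))| := this
end

section
/- Let T be a tree having at least one infinite path and let λ be its leftmost infinite path. Then the trial-and-error sequence (u_n) is well defined for all n (at each step, if u_n is terminal then it has the form v011…1, so the backtracking rule applies), and no u_n lies to the right of λ. -/
/-- `T` is a tree: a set of finite binary strings closed under taking prefixes. -/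
def IsBinTree (T : Set (List Bool)) : Prop :=
  ∀ u ∈ T, ∀ v : List Bool, v.IsPrefix u → v ∈ T

/-- The length-`n` initial segment of an infinite binary sequence, as a string. -/
def initSeg (x : ℕ → Bool) (n : ℕ) : List Bool :=
  List.ofFn fun i : Fin n => x i

/-- `x` is an infinite path of `T`: every finite initial segment belongs to `T`. -/
def IsInfPath (T : Set (List Bool)) (x : ℕ → Bool) : Prop :=
  ∀ n : ℕ, initSeg x n ∈ T

/-- A node `u` is fertile if some infinite path of `T` has `u` as initial segment. -/
def FertileNode (T : Set (List Bool)) (u : List Bool) : Prop :=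
  ∃ x : ℕ → Bool, IsInfPath T x ∧ ∀ i : Fin u.length, x i = u.get i

/-- A node `u` is terminal if neither `u0` nor `u1` belongs to `T`. -/
def TerminalNode (T : Set (List Bool)) (u : List Bool) : Prop :=
  u ++ [false] ∉ T ∧ u ++ [true] ∉ T

namespace TAEaux

lemma initSeg_length (x : ℕ → Bool) (n : ℕ) : (initSeg x n).length = n :=
  List.length_ofFn

lemma initSeg_getElem (x : ℕ → Bool) {n j : ℕ} (h : j < (initSeg x n).length) :
    (initSeg x n)[j] = x j := by
  simp [initSeg]

lemma initSeg_succ (x : ℕ → Bool) (n : ℕ) :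
    initSeg x (n + 1) = initSeg x n ++ [x n] := by
  rw [initSeg, List.ofFn_succ', List.concat_eq_append]
  rfl

lemma fertile_iff (T : Set (List Bool)) (u : List Bool) :
    FertileNode T u ↔ ∃ x : ℕ → Bool, IsInfPath T x ∧ initSeg x u.length = u := by
  constructor
  · rintro ⟨x, hx, h⟩
    refine ⟨x, hx, List.ext_getElem (by simp [initSeg_length]) fun j h1 h2 => ?_⟩
    rw [initSeg_getElem x h1]
    exact (h ⟨j, h2⟩)
  · rintro ⟨x, hx, h⟩
    refine ⟨x, hx, fun i => ?_⟩
    have : (initSeg x u.length)[(i : ℕ)]'(by rw [initSeg_length]; exact i.2) = u.get i := by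
      simp [h]
    rw [initSeg_getElem] at this
    exact this

variable {T : Set (List Bool)} {lam : ℕ → Bool}

lemma lam_fertile (hpath : ∃ x : ℕ → Bool, IsInfPath T x)
    (hlam : ∀ n : ℕ, lam n = false ↔ FertileNode T (initSeg lam n ++ [false])) :
    ∀ n : ℕ, ∃ x : ℕ → Bool, IsInfPath T x ∧ initSeg x n = initSeg lam n := by
  intro n
  induction n with
  | zero =>
    obtain ⟨x, hx⟩ := hpath
    exact ⟨x, hx, by simp [initSeg]⟩
  | succ n ih =>
    obtain ⟨x, hx, hxe⟩ := ih
    by_cases hb : lam n = false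
    · obtain ⟨y, hy, hye⟩ := (fertile_iff T _).1 ((hlam n).1 hb)
      refine ⟨y, hy, ?_⟩
      have hl : (initSeg lam n ++ [false]).length = n + 1 := by
        simp [initSeg_length]
      rw [hl] at hye
      rw [hye, initSeg_succ, hb]
    · have hb' : lam n = true := by
        cases h : lam n
        · exact absurd h hb
        · rfl
      cases hxn : x n
      · exfalso
        apply hb
        apply (hlam n).2
        rw [fertile_iff]
        refine ⟨x, hx, ?_⟩
        have hl : (initSeg lam n ++ [false]).length = n + 1 := by
          simp [initSeg_length]
        rw [hl, initSeg_succ, hxe, hxn]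
      · refine ⟨x, hx, ?_⟩
        rw [initSeg_succ, initSeg_succ, hxe, hxn, hb']

lemma lam_path (hpath : ∃ x : ℕ → Bool, IsInfPath T x)
    (hlam : ∀ n : ℕ, lam n = false ↔ FertileNode T (initSeg lam n ++ [false])) :
    IsInfPath T lam := by
  intro n
  obtain ⟨x, hx, hxe⟩ := lam_fertile hpath hlam n
  rw [← hxe]
  exact hx n

/-- Predicate: `u` lies to the right of `lam` (negated in the theorem). -/
def NotR (lam : ℕ → Bool) (u : List Bool) : Prop :=
  ¬ ∃ i < u.length, (∀ j < i, u.getD j false = lam j) ∧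
      u.getD i false = true ∧ lam i = false

lemma notTerminal_of_prefix (hlp : IsInfPath T lam) {u : List Bool}
    (h : ∀ j < u.length, u.getD j false = lam j) : ¬ TerminalNode T u := by
  have hu : u = initSeg lam u.length := by
    refine List.ext_getElem (by simp [initSeg_length]) fun j h1 h2 => ?_
    rw [initSeg_getElem lam h2, ← h j h1, List.getD_eq_getElem _ _ h1]
  intro ht
  have hmem : u ++ [lam u.length] ∈ T := by
    have := hlp (u.length + 1)
    rw [initSeg_succ] at this
    rw [hu]
    convert this using 3 <;> rw [← hu]
  cases hl : lam u.length
  · rw [hl] at hmem; exact ht.1 hmem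
  · rw [hl] at hmem; exact ht.2 hmem

lemma agree_of {u : List Bool} {c : ℕ} (hn : NotR lam u)
    (htrue : ∀ j, c ≤ j → j < u.length → u.getD j false = true)
    (hagr : ∀ j < c, u.getD j false = lam j) :
    ∀ j < u.length, u.getD j false = lam j := by
  intro j
  induction j using Nat.strong_induction_on with
  | _ j ih =>
    intro hj
    by_cases hjc : j < c
    · exact hagr j hjc
    · have hc : c ≤ j := le_of_not_gt hjc
      have hval := htrue j hc hj
      cases hl : lam j
      · exact absurd ⟨j, hj, fun k hk => ih k hk (lt_trans hk hj), hval, hl⟩ hn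
      · rw [hval]

lemma exists_false_entry (hlp : IsInfPath T lam) {u : List Bool}
    (hn : NotR lam u) (ht : TerminalNode T u) :
    ∃ j < u.length, u.getD j false = false := by
  by_contra h
  push_neg at h
  have htrue : ∀ j, (0:ℕ) ≤ j → j < u.length → u.getD j false = true := by
    intro j _ hj
    cases hv : u.getD j false
    · exact absurd hv (h j hj)
    · rfl
  have := agree_of hn htrue (fun j hj => absurd hj (Nat.not_lt_zero j))
  exact notTerminal_of_prefix hlp this ht

lemma decomp (u : List Bool) (h : ∃ j < u.length, u.getD j false = false) :
    ∃ (v : List Bool) (m : ℕ), u = v ++ false :: List.replicate m true := by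
  induction u using List.reverseRecOn with
  | nil => obtain ⟨j, hj, _⟩ := h; simp at hj
  | append_singleton ys b ih =>
    cases b
    · exact ⟨ys, 0, by simp⟩
    · obtain ⟨j, hj, hv⟩ := h
      rw [List.length_append, List.length_singleton] at hj
      have hj' : j < ys.length := by
        rcases Nat.lt_or_ge j ys.length with h' | h'
        · exact h'
        · exfalso
          rw [List.getD_append_right _ _ _ _ h'] at hv
          have : j - ys.length = 0 := by omega
          rw [this] at hv
          simp at hv
      rw [List.getD_append _ _ _ _ hj'] at hv
      obtain ⟨v, m, hvm⟩ := ih ⟨j, hj', hv⟩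
      refine ⟨v, m + 1, ?_⟩
      rw [hvm, List.replicate_succ']
      simp

end TAEaux

open TAEaux in
/-- The trial-and-error sequence is well defined (each terminal `u_n` has the form
`v011…1`) and no `u_n` lies to the right of the leftmost infinite path λ. -/
theorem trial_and_error_wellDefined_not_right (T : Set (List Bool))
    (hT : IsBinTree T) (hpath : ∃ x : ℕ → Bool, IsInfPath T x)
    (lam : ℕ → Bool)
    (hlam : ∀ n : ℕ, lam n = false ↔ FertileNode T (initSeg lam n ++ [false]))
    (u : ℕ → List Bool) (hu0 : u 0 = [])
    (hu1 : ∀ n : ℕ, ¬ TerminalNode T (u n) → u (n + 1) = u n ++ [false])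
    (hu2 : ∀ n : ℕ, ∀ v : List Bool, ∀ m : ℕ, TerminalNode T (u n) →
      u n = v ++ false :: List.replicate m true → u (n + 1) = v ++ [true]) :
    (∀ n : ℕ, TerminalNode T (u n) →
      ∃ (v : List Bool) (m : ℕ), u n = v ++ false :: List.replicate m true) ∧
    (∀ n : ℕ, ¬ ∃ i < (u n).length, (∀ j < i, (u n).getD j false = lam j) ∧
      (u n).getD i false = true ∧ lam i = false) := by
  have hlp : IsInfPath T lam := lam_path hpath hlam
  have key : ∀ n, NotR lam (u n) := by
    intro n
    induction n with
    | zero =>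
      rw [hu0]
      rintro ⟨i, hi, -⟩
      simp at hi
    | succ n ih =>
      by_cases ht : TerminalNode T (u n)
      · obtain ⟨v, m, hvm⟩ := decomp _ (exists_false_entry hlp ih ht)
        rw [hu2 n v m ht hvm]
        have hlen : (u n).length = v.length + 1 + m := by
          rw [hvm]; simp; omega
        have h1 : ∀ j < v.length, (u n).getD j false = v.getD j false := by
          intro j hj
          rw [hvm, List.getD_append _ _ _ _ hj]
        have h2 : (u n).getD v.length false = false := by
          rw [hvm, List.getD_append_right _ _ _ _ le_rfl]
          simp
        have h3 : ∀ j, v.length + 1 ≤ j → j < (u n).length → (u n).getD j false = true := by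
          intro j hj1 hj2
          rw [hvm, List.getD_append_right _ _ _ _ (by omega)]
          have he : j - v.length = (j - v.length - 1) + 1 := by omega
          rw [he, List.getD_cons_succ]
          have hk : j - v.length - 1 < m := by omega
          rw [List.getD_eq_getElem _ _ (by simpa using hk), List.getElem_replicate]
        rintro ⟨i, hi, hagr, hval, hlami⟩
        rw [List.length_append, List.length_singleton] at hi
        rcases Nat.lt_or_ge i v.length with hiv | hiv
        · apply ih
          refine ⟨i, by omega, fun j hj => ?_, ?_, hlami⟩
          · rw [h1 j (lt_trans hj hiv), ← List.getD_append _ _ false j (lt_trans hj hiv)]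
            exact hagr j hj
          · rw [h1 i hiv, ← List.getD_append _ _ false i hiv]
            exact hval
        · have hiv' : i = v.length := by omega
          subst hiv'
          have hagr' : ∀ j < v.length + 1, (u n).getD j false = lam j := by
            intro j hj
            rcases Nat.lt_or_ge j v.length with hjv | hjv
            · rw [h1 j hjv, ← List.getD_append _ _ false j hjv]
              exact hagr j hjv
            · have : j = v.length := by omega
              subst this
              rw [h2, hlami]
          have hall := agree_of ih h3 hagr'
          exact notTerminal_of_prefix hlp hall ht
      · rw [hu1 n ht]
        rintro ⟨i, hi, hagr, hval, hlami⟩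
        rw [List.length_append, List.length_singleton] at hi
        have hi' : i < (u n).length := by
          rcases Nat.lt_or_ge i (u n).length with h' | h'
          · exact h'
          · exfalso
            rw [List.getD_append_right _ _ _ _ h'] at hval
            have : i - (u n).length = 0 := by omega
            rw [this] at hval
            simp at hval
        apply ih
        refine ⟨i, hi', fun j hj => ?_, ?_, hlami⟩
        · rw [← List.getD_append _ _ false j (lt_trans hj hi')]
          exact hagr j hj
        · rw [← List.getD_append _ _ false i hi']
          exact hval
  exact ⟨fun n ht => decomp _ (exists_false_entry hlp (key n) ht), key⟩
end

section
/- Let T be a tree having at least one infinite path and let λ be its leftmost infinite path. Then the trial-and-error sequence (u_n) reaches every initial segment of λ: for every J ∈ ℕ there exists n such that u_n = λ(0)λ(1)…λ(J−1). -/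
private lemma initSeg_succ (x : ℕ → Bool) (n : ℕ) :
    initSeg x (n + 1) = initSeg x n ++ [x n] := by
  rw [initSeg, initSeg, List.ofFn_succ']
  simp

private lemma length_initSeg (x : ℕ → Bool) (n : ℕ) : (initSeg x n).length = n := by
  simp [initSeg]

private lemma getElem_initSeg (x : ℕ → Bool) (n i : ℕ) (h : i < (initSeg x n).length) :
    (initSeg x n)[i] = x i := by
  simp [initSeg]

private lemma getElem_concat (l : List Bool) (b : Bool) (i : ℕ) (hi : i < (l ++ [b]).length) :
    (l ++ [b])[i] = if h : i < l.length then l[i] else b := by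
  rcases Nat.lt_or_ge i l.length with h | h
  · rw [dif_pos h]
    exact List.getElem_append_left h
  · have hil : i = l.length := by simp only [List.length_append, List.length_singleton] at hi; omega
    rw [dif_neg (by omega)]
    exact List.getElem_concat_length hil _

private lemma fertile_of_append (T : Set (List Bool)) (w : List Bool) (b : Bool)
    (h : FertileNode T (w ++ [b])) : FertileNode T w := by
  obtain ⟨x, hx, hag⟩ := h
  refine ⟨x, hx, fun i => ?_⟩
  have hi : (i : ℕ) < (w ++ [b]).length := by simp
  have h2 := hag ⟨i, hi⟩
  rw [List.get_eq_getElem] at h2 ⊢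
  rw [h2, getElem_concat, dif_pos i.isLt]

private lemma not_terminal_of_fertile (T : Set (List Bool)) (w : List Bool)
    (h : FertileNode T w) : ¬ TerminalNode T w := by
  obtain ⟨x, hx, hag⟩ := h
  have hmem := hx (w.length + 1)
  have heq : initSeg x (w.length + 1) = w ++ [x w.length] := by
    rw [initSeg_succ]
    congr 1
    apply List.ext_getElem (by simp [length_initSeg])
    intro i h1 h2
    rw [getElem_initSeg]
    exact (hag ⟨i, h2⟩).trans List.get_eq_getElem
  rintro ⟨hf, ht⟩
  rw [heq] at hmem
  cases hxw : x w.length with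
  | false => rw [hxw] at hmem; exact hf hmem
  | true => rw [hxw] at hmem; exact ht hmem

private lemma fertile_initSeg (T : Set (List Bool))
    (hpath : ∃ x : ℕ → Bool, IsInfPath T x) (lam : ℕ → Bool)
    (hlam : ∀ n : ℕ, lam n = false ↔ FertileNode T (initSeg lam n ++ [false])) :
    ∀ n, FertileNode T (initSeg lam n) := by
  intro n
  induction n with
  | zero =>
    obtain ⟨x, hx⟩ := hpath
    exact ⟨x, hx, fun i => absurd i.isLt (by simp [length_initSeg])⟩
  | succ n ih =>
    obtain ⟨x, hx, hag⟩ := ih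
    have hagext : ∀ b : Bool, x n = b →
        ∀ i : Fin (initSeg lam n ++ [b]).length, x i = (initSeg lam n ++ [b]).get i := by
      intro b hb i
      rw [List.get_eq_getElem, getElem_concat]
      split
      · next h =>
        have := hag ⟨i, h⟩
        rwa [List.get_eq_getElem] at this
      · next h =>
        have hi : (i : ℕ) = n := by
          have := i.isLt
          simp [length_initSeg] at this h
          omega
        rw [hi, hb]
    rw [initSeg_succ]
    cases hl : lam n with
    | false =>
      exact (hlam n).mp hl
    | true =>
      have hnf : ¬ FertileNode T (initSeg lam n ++ [false]) := by
        intro hc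
        have h2 := (hlam n).mpr hc
        rw [hl] at h2
        exact absurd h2 (by simp)
      cases hxn : x n with
      | false => exact absurd ⟨x, hx, hagext false hxn⟩ hnf
      | true => exact ⟨x, hx, hagext true hxn⟩

open Classical in
private noncomputable def kgF (S : Set (List Bool)) : List Bool → List Bool :=
  fun l => if ({s ∈ S | l ++ [false] <+: s}).Infinite then l ++ [false] else l ++ [true]

private noncomputable def kg (S : Set (List Bool)) (v : List Bool) : ℕ → List Bool :=
  fun n => (kgF S)^[n] v

private lemma koenig (T : Set (List Bool)) (hT : IsBinTree T) (v : List Bool)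
    (h : {s | s ∈ T ∧ v <+: s}.Infinite) : FertileNode T v := by
  classical
  set S := {s | s ∈ T ∧ v <+: s} with hSdef
  have key : ∀ l : List Bool, ({s ∈ S | l <+: s}).Infinite →
      ({s ∈ S | l ++ [false] <+: s}).Infinite ∨ ({s ∈ S | l ++ [true] <+: s}).Infinite := by
    intro l hl
    by_contra hc
    push_neg at hc
    obtain ⟨h1, h2⟩ := hc
    apply hl
    apply Set.Finite.subset ((Set.finite_singleton l).union (h1.union h2))
    rintro s ⟨hs, t, rfl⟩
    cases t with
    | nil => left; simp
    | cons b t' =>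
      right
      cases b
      · left; exact ⟨hs, ⟨t', by simp⟩⟩
      · right; exact ⟨hs, ⟨t', by simp⟩⟩
  have hgsucc : ∀ n, kg S v (n + 1) = kgF S (kg S v n) := fun n =>
    Function.iterate_succ_apply' (kgF S) n v
  have hg0 : kg S v 0 = v := rfl
  have hstep : ∀ n, ∃ b, kg S v (n + 1) = kg S v n ++ [b] := by
    intro n
    rw [hgsucc, kgF]
    split <;> exact ⟨_, rfl⟩
  have hinf : ∀ n, ({s ∈ S | kg S v n <+: s}).Infinite := by
    intro n
    induction n with
    | zero => exact h.mono fun s hs => ⟨hs, hs.2⟩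
    | succ n ih =>
      rw [hgsucc, kgF]
      split
      · next hcond => exact hcond
      · next hcond =>
        rcases key (kg S v n) ih with h1 | h1
        · exact absurd h1 hcond
        · exact h1
  have hlen : ∀ n, (kg S v n).length = v.length + n := by
    intro n
    induction n with
    | zero => rfl
    | succ n ih =>
      obtain ⟨b, hb⟩ := hstep n
      rw [hb]
      simp [ih]
      omega
  have hpre : ∀ n m, n ≤ m → kg S v n <+: kg S v m := by
    intro n m hnm
    induction m, hnm using Nat.le_induction with
    | base => exact List.prefix_refl _
    | succ m hm ih =>
      obtain ⟨b, hb⟩ := hstep m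
      rw [hb]
      exact ih.trans (List.prefix_append _ _)
  have gT : ∀ n, kg S v n ∈ T := by
    intro n
    obtain ⟨s, hs⟩ := (hinf n).nonempty
    exact hT s hs.1.1 _ hs.2
  set x : ℕ → Bool := fun i => (kg S v (i + 1)).getD i false with hxdef
  have hx_stable : ∀ n i, (hi : i < (kg S v n).length) → x i = (kg S v n)[i] := by
    intro n i hi
    have hi' : i < (kg S v (i + 1)).length := by rw [hlen]; omega
    rw [hxdef]
    simp only
    rw [List.getD_eq_getElem _ _ hi']
    rcases Nat.le_total (i + 1) n with hc | hc
    · exact (hpre _ _ hc).getElem hi'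
    · exact ((hpre _ _ hc).getElem hi).symm
  have hpath : IsInfPath T x := by
    intro n
    have htake : initSeg x n = (kg S v n).take n := by
      apply List.ext_getElem
      · simp [length_initSeg, hlen]
      · intro i h1 h2
        rw [getElem_initSeg, List.getElem_take]
        exact hx_stable n i (by rw [hlen]; rw [length_initSeg] at h1; omega)
    rw [htake]
    exact hT _ (gT n) _ (List.take_prefix _ _)
  refine ⟨x, hpath, fun i => ?_⟩
  rw [List.get_eq_getElem]
  exact hx_stable 0 i i.isLt

private lemma exit_lemma (T : Set (List Bool)) (hT : IsBinTree T) (u : ℕ → List Bool)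
    (hu1 : ∀ n : ℕ, ¬ TerminalNode T (u n) → u (n + 1) = u n ++ [false])
    (hu2 : ∀ n : ℕ, ∀ v : List Bool, ∀ m : ℕ, TerminalNode T (u n) →
      u n = v ++ false :: List.replicate m true → u (n + 1) = v ++ [true])
    (N : ℕ) :
    ∀ v p : List Bool, ∀ k n : ℕ, ({s | s ∈ T ∧ v <+: s}).Finite →
      ({s | s ∈ T ∧ v <+: s}).ncard ≤ N → ¬ FertileNode T v → u n = v →
      v = p ++ false :: List.replicate k true → ∃ m, u m = p ++ [true] := by
  induction N with
  | zero =>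
    intro v p k n hfin hcard hnf hun hdec
    by_cases hterm : TerminalNode T v
    · exact ⟨n + 1, hu2 n p k (by rw [hun]; exact hterm) (by rw [hun]; exact hdec)⟩
    · exfalso
      have hvT : v ∈ T := by
        by_contra hv
        exact hterm ⟨fun hc => hv (hT _ hc v (List.prefix_append _ _)),
          fun hc => hv (hT _ hc v (List.prefix_append _ _))⟩
      have := Set.ncard_pos hfin |>.mpr ⟨v, hvT, List.prefix_refl v⟩
      omega
  | succ N IH =>
    intro v p k n hfin hcard hnf hun hdec
    by_cases hterm : TerminalNode T v
    · exact ⟨n + 1, hu2 n p k (by rw [hun]; exact hterm) (by rw [hun]; exact hdec)⟩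
    · have hvT : v ∈ T := by
        by_contra hv
        exact hterm ⟨fun hc => hv (hT _ hc v (List.prefix_append _ _)),
          fun hc => hv (hT _ hc v (List.prefix_append _ _))⟩
      have hmemv : v ∈ {s | s ∈ T ∧ v <+: s} := ⟨hvT, List.prefix_refl v⟩
      have hsub : ∀ b : Bool, {s | s ∈ T ∧ v ++ [b] <+: s} ⊆ {s | s ∈ T ∧ v <+: s} \ {v} := by
        rintro b s ⟨hsT, hp⟩
        refine ⟨⟨hsT, (List.prefix_append v [b]).trans hp⟩, ?_⟩
        intro hs
        rw [Set.mem_singleton_iff] at hs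
        subst hs
        have := hp.length_le
        simp at this
      have hfin' : ∀ b : Bool, ({s | s ∈ T ∧ v ++ [b] <+: s}).Finite := fun b =>
        Set.Finite.subset hfin.diff (hsub b)
      have hcard' : ∀ b : Bool, ({s | s ∈ T ∧ v ++ [b] <+: s}).ncard ≤ N := by
        intro b
        have h1 := Set.ncard_le_ncard (hsub b) hfin.diff
        rw [Set.ncard_diff_singleton_of_mem hmemv] at h1
        have h2 := Set.ncard_pos hfin |>.mpr ⟨v, hmemv⟩
        omega
      have hnf' : ∀ b : Bool, ¬ FertileNode T (v ++ [b]) := fun b hb =>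
        hnf (fertile_of_append T v b hb)
      have hnext : u (n + 1) = v ++ [false] := by
        rw [hu1 n (by rw [hun]; exact hterm), hun]
      obtain ⟨m1, hm1⟩ := IH (v ++ [false]) v 0 (n + 1) (hfin' false) (hcard' false)
        (hnf' false) hnext (by simp)
      obtain ⟨m2, hm2⟩ := IH (v ++ [true]) p (k + 1) m1 (hfin' true) (hcard' true)
        (hnf' true) hm1 (by rw [hdec]; simp [List.replicate_succ'])
      exact ⟨m2, hm2⟩

/-- The trial-and-error sequence reaches every initial segment of the leftmost
infinite path λ: for every J there exists n with u_n = λ(0)…λ(J−1). -/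
theorem trial_and_error_reaches_leftmost (T : Set (List Bool))
    (hT : IsBinTree T) (hpath : ∃ x : ℕ → Bool, IsInfPath T x)
    (lam : ℕ → Bool)
    (hlam : ∀ n : ℕ, lam n = false ↔ FertileNode T (initSeg lam n ++ [false]))
    (u : ℕ → List Bool) (hu0 : u 0 = [])
    (hu1 : ∀ n : ℕ, ¬ TerminalNode T (u n) → u (n + 1) = u n ++ [false])
    (hu2 : ∀ n : ℕ, ∀ v : List Bool, ∀ m : ℕ, TerminalNode T (u n) →
      u n = v ++ false :: List.replicate m true → u (n + 1) = v ++ [true]) :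
    ∀ J : ℕ, ∃ n : ℕ, u n = initSeg lam J := by
  intro J
  induction J with
  | zero => exact ⟨0, by simp [hu0, initSeg]⟩
  | succ J ih =>
    obtain ⟨n, hn⟩ := ih
    have hfert := fertile_initSeg T hpath lam hlam J
    have hnt := not_terminal_of_fertile T _ hfert
    have hnext : u (n + 1) = initSeg lam J ++ [false] := by
      rw [hu1 n (by rw [hn]; exact hnt), hn]
    cases hl : lam J with
    | false =>
      exact ⟨n + 1, by rw [hnext, initSeg_succ, hl]⟩
    | true =>
      have hnf : ¬ FertileNode T (initSeg lam J ++ [false]) := by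
        intro hc
        have h2 := (hlam J).mpr hc
        rw [hl] at h2
        exact absurd h2 (by simp)
      have hfin : ({s | s ∈ T ∧ (initSeg lam J ++ [false]) <+: s}).Finite := by
        by_contra hc
        exact hnf (koenig T hT _ hc)
      obtain ⟨m, hm⟩ := exit_lemma T hT u hu1 hu2
        (({s | s ∈ T ∧ (initSeg lam J ++ [false]) <+: s}).ncard)
        (initSeg lam J ++ [false]) (initSeg lam J) 0 (n + 1) hfin le_rfl hnf hnext (by simp)
      exact ⟨m, by rw [initSeg_succ, hl]; exact hm⟩
end

section
/- There exists a tree T (a set of finite binary strings closed under taking prefixes) whose membership predicate is computable, which has an infinite path, but has no computable infinite path: no computable function x : ℕ → {0,1} has all of its initial segments in T. -/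
open Nat.Partrec (Code)
open Nat.Partrec.Code

/-- The Kleene-tree-style check function: `u` passes if for every `e < u.length`,
if code `e` halts on input `e` within `u.length` steps with output `k`, then
the `e`-th bit of `u` differs from `decide (k = 1)`. -/
def kleeneF (u : List Bool) : Bool :=
  (List.range u.length).all fun e =>
    (evaln u.length (Denumerable.ofNat Code e) e).elim true
      (fun k => !(u.getD e false == decide (k = 1)))

lemma kleeneF_iff (u : List Bool) :
    kleeneF u = true ↔
      ∀ e < u.length, ∀ k, evaln u.length (Denumerable.ofNat Code e) e = some k →
        u.getD e false ≠ decide (k = 1) := by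
  simp only [kleeneF, List.all_eq_true, List.mem_range]
  constructor
  · intro h e he k hk
    have := h e he
    rw [hk] at this
    simpa using this
  · intro h e he
    cases hk : evaln u.length (Denumerable.ofNat Code e) e with
    | none => rfl
    | some k => simpa using h e he k hk

lemma primrec_list_all {α β : Type*} [Primcodable α] [Primcodable β]
    {f : α → List β} {p : α → β → Bool} (hf : Primrec f) (hp : Primrec₂ p) :
    Primrec fun a => (f a).all (p a) := by
  have : Primrec fun a => (f a).foldr (fun b s => p a b && s) true :=
    Primrec.list_foldr hf (Primrec.const true)
      (Primrec.and.comp (hp.comp Primrec.fst (Primrec.fst.comp Primrec.snd))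
        (Primrec.snd.comp Primrec.snd)).to₂
  exact this.of_eq fun a => by induction f a <;> simp [List.all_cons, *]

lemma primrec_kleeneF : Primrec kleeneF := by
  have hlen : Primrec fun u : List Bool => u.length := Primrec.list_length
  have hev : Primrec fun p : List Bool × ℕ =>
      evaln p.1.length (Denumerable.ofNat Code p.2) p.2 :=
    primrec_evaln.comp <|
      ((hlen.comp Primrec.fst).pair ((Primrec.ofNat Code).comp Primrec.snd)).pair Primrec.snd
  have hbit : Primrec fun p : List Bool × ℕ => p.1.getD p.2 false :=
    (Primrec.list_getD false).comp Primrec.fst Primrec.snd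
  have hinner : Primrec fun p : List Bool × ℕ =>
      (evaln p.1.length (Denumerable.ofNat Code p.2) p.2).elim true
        (fun k => !(p.1.getD p.2 false == decide (k = 1))) := by
    have := Primrec.option_casesOn hev (Primrec.const true)
      ((Primrec.not.comp (Primrec.beq.comp (hbit.comp Primrec.fst)
        ((Primrec.eq.comp Primrec.snd (Primrec.const 1)).decide))).to₂)
    exact this.of_eq fun p => by
      cases evaln p.1.length (Denumerable.ofNat Code p.2) p.2 <;> rfl
  exact primrec_list_all (Primrec.list_range.comp hlen) hinner.to₂

/-- There is a tree of binary strings with computable membership predicate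
which has an infinite path but no computable infinite path. -/
theorem exists_computable_tree_no_computable_path :
    ∃ T : Set (List Bool),
      (∀ u ∈ T, ∀ v : List Bool, v.IsPrefix u → v ∈ T) ∧
      ComputablePred (fun u : List Bool => u ∈ T) ∧
      (∃ x : ℕ → Bool, ∀ n : ℕ, (List.ofFn fun i : Fin n => x i) ∈ T) ∧
      (∀ x : ℕ → Bool, Computable x →
        ¬ ∀ n : ℕ, (List.ofFn fun i : Fin n => x i) ∈ T) := by
  refine ⟨{u | kleeneF u = true}, ?_, ?_, ?_, ?_⟩
  · -- prefix closed
    intro u hu v hv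
    rw [Set.mem_setOf_eq, kleeneF_iff] at hu ⊢
    intro e he k hk
    have hle : v.length ≤ u.length := hv.length_le
    have hk' : evaln u.length (Denumerable.ofNat Code e) e = some k :=
      evaln_mono hle hk
    have := hu e (lt_of_lt_of_le he hle) k hk'
    have hget : v.getD e false = u.getD e false := by
      rw [List.getD_eq_getElem _ _ he,
        List.getD_eq_getElem _ _ (lt_of_lt_of_le he hle), hv.getElem he]
    rwa [hget]
  · -- computable membership
    exact ComputablePred.computable_iff.2
      ⟨kleeneF, primrec_kleeneF.to_comp, rfl⟩
  · -- existence of a path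
    classical
    refine ⟨fun e => !decide (1 ∈ (Denumerable.ofNat Code e).eval e), fun n => ?_⟩
    rw [Set.mem_setOf_eq, kleeneF_iff]
    intro e he k hk h
    simp only [List.length_ofFn] at *
    have hget : (List.ofFn fun i : Fin n => !decide (1 ∈ (Denumerable.ofNat Code i).eval i)).getD
        e false = !decide (1 ∈ (Denumerable.ofNat Code e).eval e) := by
      rw [List.getD_eq_getElem _ _ (by simpa using he)]
      simp
    rw [hget] at h
    have hkev : k ∈ (Denumerable.ofNat Code e).eval e := evaln_sound hk
    by_cases h1 : (1 : ℕ) ∈ (Denumerable.ofNat Code e).eval e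
    · have : k = 1 := Part.mem_unique hkev h1
      simp [h1, this] at h
    · have : k ≠ 1 := fun hk1 => h1 (hk1 ▸ hkev)
      simp [h1, this] at h
  · -- no computable path
    intro x hx hmem
    have hg : Computable fun n => Encodable.encode (x n) := Computable.encode.comp hx
    have hpr : Nat.Partrec fun n => Part.some (Encodable.encode (x n)) :=
      Partrec.nat_iff.1 hg.partrec
    obtain ⟨c, hc⟩ := exists_code.1 hpr
    set e := Encodable.encode c with he
    have hce : Denumerable.ofNat Code e = c := Denumerable.ofNat_encode c
    have hev : Encodable.encode (x e) ∈ c.eval e := by rw [hc]; exact Part.mem_some _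
    obtain ⟨m, hm⟩ := evaln_complete.1 hev
    set N := max m (e + 1) with hN
    have heN : e < N := lt_of_lt_of_le (Nat.lt_succ_self e) (le_max_right _ _)
    have hmN : evaln N c e = some (Encodable.encode (x e)) :=
      evaln_mono (le_max_left _ _) hm
    have h := (kleeneF_iff _).1 (hmem N) e (by simpa using heN) (Encodable.encode (x e))
      (by rw [List.length_ofFn, hce]; exact hmN)
    apply h
    rw [List.getD_eq_getElem _ _ (by simpa using heN)]
    simp only [List.getElem_ofFn]
    cases hxe : x e <;> simp [Encodable.encode_true, Encodable.encode_false, hxe]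
end

section
/- There exists a compact, self-adjoint, bounded linear operator S on the Hilbert space ℓ²(ℕ) such that for every j ∈ ℕ, the real number 2^{−j} is an eigenvalue of S if and only if j ∈ A; moreover every nonzero eigenvalue of S equals 2^{−a(n)} for some n ∈ ℕ. -/
noncomputable section DiagEnc

open scoped ENNReal

private abbrev E2 : Type := lp (fun _ : ℕ => ℝ) 2

private lemma two_toReal : (2 : ℝ≥0∞).toReal = 2 := by norm_num
private lemma two_pos' : 0 < (2 : ℝ≥0∞).toReal := by norm_num

private lemma lp_norm_le_of_le {g f : E2} {C : ℝ} (hC : 0 ≤ C)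
    (h : ∀ n, ‖g n‖ ≤ C * ‖f n‖) : ‖g‖ ≤ C * ‖f‖ := by
  refine lp.norm_le_of_tsum_le two_pos' (mul_nonneg hC (norm_nonneg f)) ?_
  have hg : Summable fun n => ‖g n‖ ^ (2 : ℝ≥0∞).toReal := (lp.memℓp g).summable two_pos'
  have hf : Summable fun n => ‖f n‖ ^ (2 : ℝ≥0∞).toReal := (lp.memℓp f).summable two_pos'
  have hb : ∀ n, ‖g n‖ ^ (2 : ℝ≥0∞).toReal ≤ C ^ (2 : ℝ≥0∞).toReal * ‖f n‖ ^ (2 : ℝ≥0∞).toReal := by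
    intro n
    rw [← Real.mul_rpow hC (norm_nonneg _)]
    exact Real.rpow_le_rpow (norm_nonneg _) (h n) (by rw [two_toReal]; norm_num)
  calc ∑' n, ‖g n‖ ^ (2 : ℝ≥0∞).toReal
      ≤ ∑' n, C ^ (2 : ℝ≥0∞).toReal * ‖f n‖ ^ (2 : ℝ≥0∞).toReal :=
        Summable.tsum_le_tsum hb hg (hf.mul_left _)
    _ = C ^ (2 : ℝ≥0∞).toReal * ∑' n, ‖f n‖ ^ (2 : ℝ≥0∞).toReal := tsum_mul_left
    _ = C ^ (2 : ℝ≥0∞).toReal * ‖f‖ ^ (2 : ℝ≥0∞).toReal := by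
        rw [lp.norm_rpow_eq_tsum two_pos']
    _ = (C * ‖f‖) ^ (2 : ℝ≥0∞).toReal := (Real.mul_rpow hC (norm_nonneg _)).symm

private lemma memℓp_mul {w : ℕ → ℝ} {C : ℝ} (hw : ∀ n, |w n| ≤ C) (f : E2) :
    Memℓp (fun n => w n * f n) 2 := by
  apply memℓp_gen
  have hf : Summable fun n => ‖f n‖ ^ (2 : ℝ≥0∞).toReal := (lp.memℓp f).summable two_pos'
  refine Summable.of_nonneg_of_le (fun n => ?_) (fun n => ?_)
    (hf.mul_left (C ^ (2 : ℝ≥0∞).toReal))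
  · positivity
  · have hC : 0 ≤ C := (abs_nonneg _).trans (hw 0)
    rw [← Real.mul_rpow hC (norm_nonneg _)]
    refine Real.rpow_le_rpow (norm_nonneg _) ?_ (by rw [two_toReal]; norm_num)
    rw [norm_mul]
    exact mul_le_mul_of_nonneg_right ((Real.norm_eq_abs _).le.trans (hw n)) (norm_nonneg _)

/-- Diagonal (multiplication) operator on ℓ². -/
private def mulCLM (w : ℕ → ℝ) (C : ℝ) (hw : ∀ n, |w n| ≤ C) : E2 →L[ℝ] E2 :=
  LinearMap.mkContinuous
    { toFun := fun f => (⟨fun n => w n * f n, memℓp_mul hw f⟩ : E2)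
      map_add' := fun f g => by
        apply lp.ext; funext n
        simp only [lp.coeFn_add, Pi.add_apply]
        ring
      map_smul' := fun c f => by
        apply lp.ext; funext n
        simp only [lp.coeFn_smul, Pi.smul_apply, smul_eq_mul, RingHom.id_apply]
        ring }
    C
    (fun f => by
      have hC : 0 ≤ C := (abs_nonneg _).trans (hw 0)
      refine lp_norm_le_of_le hC fun n => ?_
      show ‖w n * f n‖ ≤ C * ‖f n‖
      rw [norm_mul]
      exact mul_le_mul_of_nonneg_right ((Real.norm_eq_abs _).le.trans (hw n)) (norm_nonneg _))

private lemma mulCLM_apply {w : ℕ → ℝ} {C : ℝ} (hw : ∀ n, |w n| ≤ C) (f : E2) (n : ℕ) :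
    (mulCLM w C hw f) n = w n * f n := rfl

private lemma mulCLM_opNorm_le {w : ℕ → ℝ} {C : ℝ} (hw : ∀ n, |w n| ≤ C)
    {C' : ℝ} (hC' : 0 ≤ C') (h : ∀ n, |w n| ≤ C') : ‖mulCLM w C hw‖ ≤ C' := by
  refine ContinuousLinearMap.opNorm_le_bound _ hC' fun f => ?_
  refine lp_norm_le_of_le hC' fun n => ?_
  rw [mulCLM_apply, norm_mul]
  exact mul_le_mul_of_nonneg_right ((Real.norm_eq_abs _).le.trans (h n)) (norm_nonneg _)

/-- Rank-one operators are compact. -/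
private lemma isCompactOperator_smulRight (φ : E2 →L[ℝ] ℝ) (v : E2) :
    IsCompactOperator fun f => φ f • v := by
  refine ⟨(fun c : ℝ => c • v) '' Set.Icc (-‖φ‖) ‖φ‖,
    isCompact_Icc.image (continuous_id.smul continuous_const), ?_⟩
  refine Filter.mem_of_superset (Metric.ball_mem_nhds 0 one_pos) ?_
  intro f hf
  have : ‖φ f‖ ≤ ‖φ‖ := by
    calc ‖φ f‖ ≤ ‖φ‖ * ‖f‖ := φ.le_opNorm f
    _ ≤ ‖φ‖ * 1 := by
        have : ‖f‖ ≤ 1 := by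
          rw [Metric.mem_ball, dist_zero_right] at hf
          exact hf.le
        exact mul_le_mul_of_nonneg_left this (norm_nonneg _)
    _ = ‖φ‖ := mul_one _
  rw [Real.norm_eq_abs, abs_le] at this
  exact ⟨φ f, ⟨this.1, this.2⟩, rfl⟩

private lemma isCompactOperator_sum {ι : Type*} (s : Finset ι) (F : ι → (E2 →L[ℝ] E2))
    (hF : ∀ i, IsCompactOperator (F i)) : IsCompactOperator ⇑(∑ i ∈ s, F i) := by
  classical
  induction s using Finset.induction with
  | empty =>
    rw [Finset.sum_empty]
    exact isCompactOperator_zero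
  | insert _ _ hni ih =>
    rw [Finset.sum_insert hni, ContinuousLinearMap.coe_add']
    exact (hF _).add ih

/-- Coordinate evaluation functional. -/
private def coordCLM (n : ℕ) : E2 →L[ℝ] ℝ :=
  LinearMap.mkContinuous
    { toFun := fun f => f n
      map_add' := fun f g => by simp [lp.coeFn_add]
      map_smul' := fun c f => by simp [lp.coeFn_smul] }
    1
    (fun f => by
      show ‖f n‖ ≤ 1 * ‖f‖
      simpa using lp.norm_apply_le_norm (by norm_num : (2 : ℝ≥0∞) ≠ 0) f n)

/-- There is a compact self-adjoint bounded operator S on ℓ²(ℕ) such that 2^{−j}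
is an eigenvalue of S iff j ∈ A, and every nonzero eigenvalue of S is of the
form 2^{−a(n)}. -/
theorem exists_compact_selfAdjoint_spectrum_encoding (a : ℕ → ℕ)
    (ha : Computable a) (hinj : Function.Injective a) :
    ∃ S : lp (fun _ : ℕ => ℝ) 2 →L[ℝ] lp (fun _ : ℕ => ℝ) 2,
      IsCompactOperator S ∧ IsSelfAdjoint S ∧
      (∀ j : ℕ,
        Module.End.HasEigenvalue (S : lp (fun _ : ℕ => ℝ) 2 →ₗ[ℝ] lp (fun _ : ℕ => ℝ) 2)
          ((2 : ℝ) ^ (-(j : ℤ))) ↔ j ∈ Set.range a) ∧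
      (∀ μ : ℝ, μ ≠ 0 →
        Module.End.HasEigenvalue (S : lp (fun _ : ℕ => ℝ) 2 →ₗ[ℝ] lp (fun _ : ℕ => ℝ) 2) μ →
        ∃ n : ℕ, μ = (2 : ℝ) ^ (-(a n : ℤ))) := by
  classical
  set d : ℕ → ℝ := fun n => (2 : ℝ) ^ (-(a n : ℤ)) with hd
  have hd_pos : ∀ n, 0 < d n := fun n => zpow_pos (by norm_num) _
  have hd_le_one : ∀ n, d n ≤ 1 := by
    intro n
    rw [hd]
    calc (2 : ℝ) ^ (-(a n : ℤ)) ≤ (2 : ℝ) ^ (0 : ℤ) :=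
      zpow_le_zpow_right₀ (by norm_num) (by simp)
    _ = 1 := zpow_zero 2
  have hd_abs : ∀ n, |d n| ≤ 1 := fun n => by
    rw [abs_of_pos (hd_pos n)]; exact hd_le_one n
  set S : E2 →L[ℝ] E2 := mulCLM d 1 hd_abs with hS
  have hS_apply : ∀ (f : E2) (n : ℕ), (S f) n = d n * f n := fun f n => rfl
  -- d tends to 0
  have ha_top : Filter.Tendsto a Filter.atTop Filter.atTop := by
    rw [← Nat.cofinite_eq_atTop]
    exact hinj.tendsto_cofinite
  have hd0 : Filter.Tendsto d Filter.atTop (nhds 0) := by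
    have h2 : Filter.Tendsto (fun k : ℕ => (2 : ℝ) ^ (-(k : ℤ))) Filter.atTop (nhds 0) := by
      have : ∀ k : ℕ, (2 : ℝ) ^ (-(k : ℤ)) = (1 / 2 : ℝ) ^ k := by
        intro k; rw [zpow_neg, zpow_natCast, one_div, inv_pow]
      simp only [this]
      exact tendsto_pow_atTop_nhds_zero_of_lt_one (by norm_num) (by norm_num)
    exact h2.comp ha_top
  refine ⟨S, ?_, ?_, ?_, ?_⟩
  · -- compactness
    -- truncations
    set w : ℕ → ℕ → ℝ := fun N n => if n < N then d n else 0 with hw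
    have hw_abs : ∀ N n, |w N n| ≤ 1 := by
      intro N n; rw [hw]; dsimp only; split
      · exact hd_abs n
      · simp
    set T : ℕ → (E2 →L[ℝ] E2) := fun N => mulCLM (w N) 1 (hw_abs N) with hT
    have hT_compact : ∀ N, IsCompactOperator (T N) := by
      intro N
      have hTeq : T N = ∑ m ∈ Finset.range N, (coordCLM m).smulRight (lp.single 2 m (d m)) := by
        apply ContinuousLinearMap.ext; intro f
        apply lp.ext; funext k
        rw [ContinuousLinearMap.sum_apply, lp.coeFn_sum, Finset.sum_apply]
        have : ∀ m, (((coordCLM m).smulRight (lp.single 2 m (d m) : E2)) f : ∀ _ : ℕ, ℝ) k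
            = if k = m then f m * d m else 0 := by
          intro m
          rw [ContinuousLinearMap.smulRight_apply]
          show ((f m • lp.single 2 m (d m) : E2) : ∀ _ : ℕ, ℝ) k = _
          rw [lp.coeFn_smul, Pi.smul_apply, smul_eq_mul]
          by_cases hkm : k = m
          · subst hkm; rw [lp.single_apply_self, if_pos rfl]
          · rw [lp.single_apply_ne 2 m _ hkm, if_neg hkm, mul_zero]
        simp only [this]
        rw [Finset.sum_ite_eq (Finset.range N) k (fun m => f m * d m)]
        show w N k * f k = _
        rw [hw]
        dsimp only
        simp only [Finset.mem_range]
        split <;> ring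
      rw [hTeq]
      exact isCompactOperator_sum _ _ fun m =>
        isCompactOperator_smulRight (coordCLM m) ((lp.single 2 m (d m) : E2))
    refine isCompactOperator_of_tendsto (l := Filter.atTop) (F := fun N => T N) ?_
      (Filter.Eventually.of_forall hT_compact)
    rw [Metric.tendsto_atTop]
    intro ε hε
    obtain ⟨N, hN⟩ := (Metric.tendsto_atTop.mp hd0) (ε / 2) (by linarith)
    refine ⟨N, fun n hn => ?_⟩
    have hdiff : T n - S = mulCLM (fun k => if k < n then 0 else -d k) 1
        (fun k => by split <;> simp [abs_neg, abs_of_pos (hd_pos k), hd_le_one k]) := by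
      apply ContinuousLinearMap.ext; intro f
      apply lp.ext; funext k
      rw [ContinuousLinearMap.sub_apply, lp.coeFn_sub, Pi.sub_apply]
      rw [mulCLM_apply, hS_apply, mulCLM_apply]
      rw [hw]; dsimp only
      split <;> ring
    have hbound : ∀ k, |if k < n then (0 : ℝ) else -d k| ≤ ε / 2 := by
      intro k
      split
      · simp; linarith
      · rw [abs_neg, abs_of_pos (hd_pos k)]
        have hk : k ≥ N := le_trans hn (not_lt.mp (by assumption))
        have := hN k hk
        rw [Real.dist_eq, sub_zero, abs_of_pos (hd_pos k)] at this
        linarith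
    have : ‖T n - S‖ ≤ ε / 2 := by
      rw [hdiff]
      exact mulCLM_opNorm_le _ (by linarith) hbound
    rw [dist_eq_norm]
    linarith
  · -- self-adjoint
    rw [ContinuousLinearMap.isSelfAdjoint_iff_isSymmetric]
    intro x y
    rw [lp.inner_eq_tsum, lp.inner_eq_tsum]
    congr 1
    funext i
    show inner ℝ ((S x) i) (y i) = inner ℝ (x i) ((S y) i)
    rw [hS_apply, hS_apply]
    simp only [RCLike.inner_apply, conj_trivial]
    ring
  · -- eigenvalue iff
    intro j
    constructor
    · intro hev
      obtain ⟨x, hx⟩ := hev.exists_hasEigenvector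
      have hx0 : x ≠ 0 := hx.2
      have hxeq : S x = (2 : ℝ) ^ (-(j : ℤ)) • x := by
        have := Module.End.mem_eigenspace_iff.mp hx.1
        simpa using this
      obtain ⟨k, hk⟩ : ∃ k, x k ≠ 0 := by
        by_contra h
        push_neg at h
        exact hx0 (lp.ext (funext fun k => h k))
      have hcoord : d k * x k = (2 : ℝ) ^ (-(j : ℤ)) * x k := by
        have h1 : (S x : ∀ _ : ℕ, ℝ) k = (((2 : ℝ) ^ (-(j : ℤ)) • x : E2) : ∀ _ : ℕ, ℝ) k := by
          rw [hxeq]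
        rw [hS_apply, lp.coeFn_smul, Pi.smul_apply, smul_eq_mul] at h1
        exact h1
      have hdk : d k = (2 : ℝ) ^ (-(j : ℤ)) := mul_right_cancel₀ hk hcoord
      have hneg : (-(a k : ℤ)) = -(j : ℤ) :=
        zpow_right_injective₀ (by norm_num : (0:ℝ) < 2) (by norm_num) hdk
      have : a k = j := by
        have := neg_inj.mp hneg
        exact_mod_cast this
      exact ⟨k, this⟩
    · rintro ⟨n, rfl⟩
      refine Module.End.hasEigenvalue_of_hasEigenvector
        (x := lp.single 2 n 1) ⟨Module.End.mem_eigenspace_iff.mpr ?_, ?_⟩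
      · apply lp.ext; funext k
        show (S (lp.single 2 n 1)) k = _
        rw [hS_apply, lp.coeFn_smul, Pi.smul_apply, smul_eq_mul]
        by_cases hkn : k = n
        · subst hkn; rfl
        · rw [lp.single_apply_ne 2 n _ hkn, mul_zero, mul_zero]
      · intro h
        have h1 : ((lp.single 2 n 1 : E2) : ∀ _ : ℕ, ℝ) n = 0 := by rw [h]; rfl
        rw [lp.single_apply_self] at h1
        exact one_ne_zero h1
  · -- nonzero eigenvalues
    intro μ hμ hev
    obtain ⟨x, hx⟩ := hev.exists_hasEigenvector
    have hx0 : x ≠ 0 := hx.2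
    have hxeq : S x = μ • x := by
      have := Module.End.mem_eigenspace_iff.mp hx.1
      simpa using this
    obtain ⟨k, hk⟩ : ∃ k, x k ≠ 0 := by
      by_contra h
      push_neg at h
      exact hx0 (lp.ext (funext fun k => h k))
    have hcoord : d k * x k = μ * x k := by
      have h1 : (S x : ∀ _ : ℕ, ℝ) k = ((μ • x : E2) : ∀ _ : ℕ, ℝ) k := by rw [hxeq]
      rw [hS_apply, lp.coeFn_smul, Pi.smul_apply, smul_eq_mul] at h1
      exact h1
    refine ⟨k, ?_⟩
    have := mul_right_cancel₀ hk hcoord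
    exact this.symm

end DiagEnc
end
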